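/- arXiv:1705.07343 — 12 statements merged into one kernel-verified Lean document; each statement's English description precedes it below -/
import Mathlib

section
/- In the shareable goods game (SGG) on a finite graph G with parameter k, a strategy profile s : V → {0,1} is a Nash equilibrium if and only if the set of buyers {i : s_i = 1} is a k-independent dominating set of G. -/
open Classical in
/-- Utility of player `i` in the shareable goods game (SGG) on graph `G`
with hop parameter `k`, benefit `b` and price `p`. -/
noncomputable def utilSGG {V : Type} (G : SimpleGraph V) (k : ℕ) (b p : ℚ)
    (s : V → Bool) (i : V) : ℚ :=
  if s i then b - p
  else if ∃ j, s j ∧ G.edist i j ≤ (k : ℕ∞) then b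
  else 0

/-- In the SGG, a profile is a Nash equilibrium iff the set of buyers is a
`k`-independent dominating set. -/
theorem sgg_NE_iff_kIndepDomSet {V : Type} [Fintype V] [DecidableEq V]
    (G : SimpleGraph V) (k : ℕ) (hk : 1 ≤ k) (b p : ℚ) (hp : 0 < p) (hb : p < b)
    (s : V → Bool) :
    (∀ i : V, ∀ c : Bool,
        utilSGG G k b p (Function.update s i c) i ≤ utilSGG G k b p s i) ↔
      ((∀ v : V, ∃ d, s d = true ∧ G.edist v d ≤ (k : ℕ∞)) ∧
       (∀ d d' : V, s d = true → s d' = true → d ≠ d' →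
          (k : ℕ∞) + 1 ≤ G.edist d d')) := by
  have hbp : (0:ℚ) < b - p := by linarith
  constructor
  · intro h
    refine ⟨?_, ?_⟩
    · intro v
      by_cases hv : s v = true
      · exact ⟨v, hv, by simp [SimpleGraph.edist_self]⟩
      · have hv' : s v = false := by simpa using hv
        have h1 := h v true
        simp only [utilSGG, Function.update_self, hv'] at h1
        by_contra hno
        push_neg at hno
        have hnone : ¬ ∃ j, s j ∧ G.edist v j ≤ (k : ℕ∞) := by
          rintro ⟨j, hj, hjd⟩
          exact absurd hjd (not_le.mpr (hno j hj))
        simp [hnone] at h1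
        linarith
    · intro d d' hd hd' hne
      by_contra hlt
      push_neg at hlt
      have hle : G.edist d d' ≤ (k : ℕ∞) := by
        exact Order.le_of_lt_add_one hlt
      have h2 := h d false
      simp only [utilSGG, Function.update_self, hd] at h2
      have hex : ∃ j, Function.update s d false j ∧ G.edist d j ≤ (k : ℕ∞) :=
        ⟨d', by simp [Function.update_of_ne (Ne.symm hne), hd'], hle⟩
      simp [hex] at h2
      linarith
  · rintro ⟨hdom, hind⟩ i c
    by_cases hi : s i = true
    · have hui : utilSGG G k b p s i = b - p := by simp [utilSGG, hi]
      rw [hui]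
      cases c with
      | true => simp [utilSGG, Function.update_self]
      | false =>
        have hnone : ¬ ∃ j, Function.update s i false j ∧ G.edist i j ≤ (k : ℕ∞) := by
          rintro ⟨j, hj, hjd⟩
          by_cases hji : j = i
          · subst hji; simp at hj
          · rw [Function.update_of_ne hji] at hj
            have := hind i j hi hj (fun e => hji e.symm)
            have : (k : ℕ∞) < G.edist i j := lt_of_lt_of_le (by
              exact ENat.lt_add_one_iff (by simp) |>.mpr le_rfl) this
            exact absurd hjd (not_le.mpr this)
        simp [utilSGG, Function.update_self, hnone]
        linarith
    · have hi' : s i = false := by simpa using hi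
      obtain ⟨d, hd, hdd⟩ := hdom i
      have hex : ∃ j, s j ∧ G.edist i j ≤ (k : ℕ∞) := ⟨d, hd, hdd⟩
      have hui : utilSGG G k b p s i = b := by simp [utilSGG, hi', hex]
      rw [hui]
      cases c with
      | true => simp [utilSGG, Function.update_self]; linarith
      | false =>
        simp only [utilSGG, Function.update_self]
        split
        · linarith
        · split
          · exact le_refl b
          · linarith
end

section
/- Every shareable goods game (SGG) on a finite graph admits a Nash equilibrium. -/
/-- Every SGG on a finite graph admits a Nash equilibrium. -/
theorem sgg_NE_exists {V : Type} [Fintype V] [DecidableEq V]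
    (G : SimpleGraph V) (k : ℕ) (hk : 1 ≤ k) (b p : ℚ) (hp : 0 < p) (hb : p < b) :
    ∃ s : V → Bool, ∀ i : V, ∀ c : Bool,
      utilSGG G k b p (Function.update s i c) i ≤ utilSGG G k b p s i := by
  classical
  -- independent sets in the k-th power graph
  let P : Finset V → Prop := fun S =>
    ∀ i ∈ S, ∀ j ∈ S, i ≠ j → ¬ (G.edist i j ≤ (k : ℕ∞))
  have hfin : {S : Finset V | P S}.Finite := Set.toFinite _
  obtain ⟨S, hS, hmax⟩ := hfin.exists_maximalFor Finset.card _
    ⟨∅, by intro i hi; simp at hi⟩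
  refine ⟨fun v => v ∈ S, ?_⟩
  intro i c
  by_cases hi : i ∈ S
  · -- i buys; utility is b - p
    have hsi : (fun v => decide (v ∈ S)) i = true := by simp [hi]
    rw [show utilSGG G k b p (fun v => v ∈ S) i = b - p from by
      simp [utilSGG, hi]]
    cases c with
    | true =>
      have : Function.update (fun v => decide (v ∈ S)) i true i = true := by
        simp
      simp [utilSGG, this]
    | false =>
      have hno : ¬ ∃ j, Function.update (fun v => decide (v ∈ S)) i false j = true
          ∧ G.edist i j ≤ (k : ℕ∞) := by
        rintro ⟨j, hj1, hj2⟩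
        by_cases hji : j = i
        · subst hji; simp at hj1
        · rw [Function.update_of_ne hji] at hj1
          simp at hj1
          exact hS i hi j hj1 (Ne.symm hji) hj2
      have : utilSGG G k b p (Function.update (fun v => decide (v ∈ S)) i false) i
          = 0 := by
        simp only [utilSGG, Function.update_self, if_neg hno]
        simp
      rw [this]
      linarith
  · -- i free-rides; show some S-member within distance k
    have hins : ¬ P (insert i S) := by
      intro hPins
      have hcard := hmax hPins (Finset.card_le_card (Finset.subset_insert i S))
      have : S.card < (insert i S).card := by
        rw [Finset.card_insert_of_notMem hi]; omega
      omega
    have hex : ∃ j, (decide (j ∈ S)) = true ∧ G.edist i j ≤ (k : ℕ∞) := by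
      simp only [P] at hins
      push_neg at hins
      obtain ⟨a, ha, b', hb', hab, hd⟩ := hins
      rcases Finset.mem_insert.mp ha with rfl | haS
      · rcases Finset.mem_insert.mp hb' with rfl | hbS
        · exact absurd rfl hab
        · exact ⟨b', by simp [hbS], hd⟩
      · rcases Finset.mem_insert.mp hb' with rfl | hbS
        · exact ⟨a, by simp [haS], by rwa [G.edist_comm]⟩
        · exact absurd hd (hS a haS b' hbS hab)
    have hutil : utilSGG G k b p (fun v => v ∈ S) i = b := by
      simp only [utilSGG, if_pos hex]
      simp [hi]
    rw [hutil]
    cases c with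
    | false =>
      have : Function.update (fun v => decide (v ∈ S)) i false = fun v => decide (v ∈ S) := by
        funext v
        by_cases hv : v = i
        · subst hv; simp [hi]
        · rw [Function.update_of_ne hv]
      rw [this, hutil]
    | true =>
      have : utilSGG G k b p (Function.update (fun v => decide (v ∈ S)) i true) i
          = b - p := by simp [utilSGG]
      rw [this]; linarith
end

section
/- Let G be a finite simple graph with n vertices and c connected components, and let k ≥ 1 with k' = ⌊k/2⌋ ≥ 1. If D is a k-independent dominating set of G, then |D| ≤ n/k' + c. -/
open SimpleGraph Finset

/-- Split a walk at position `i`. -/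
private lemma kIDS_walk_split {V : Type} {G : SimpleGraph V} {u v : V} (p : G.Walk u v) :
    ∀ i : ℕ, i ≤ p.length → ∃ (w : V) (q : G.Walk u w) (r : G.Walk w v),
      q.length = i ∧ q.length + r.length = p.length := by
  induction p with
  | nil => intro i hi; simp at hi; subst hi; exact ⟨_, .nil, .nil, by simp⟩
  | cons h p ih =>
      intro i hi
      match i with
      | 0 => exact ⟨_, .nil, .cons h p, by simp⟩
      | (j+1) =>
          obtain ⟨w, q, r, hq, hqr⟩ := ih j (by simpa using hi)
          exact ⟨w, .cons h q, r, by simp [hq], by simp [hq, ← hqr]; omega⟩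

private lemma kIDS_dist_triangle {V : Type} {G : SimpleGraph V} {u w v : V}
    (h1 : G.Reachable u w) (h2 : G.Reachable w v) :
    G.dist u v ≤ G.dist u w + G.dist w v := by
  obtain ⟨p, hp⟩ := h1.exists_walk_length_eq_dist
  obtain ⟨q, hq⟩ := h2.exists_walk_length_eq_dist
  calc G.dist u v ≤ (p.append q).length := SimpleGraph.dist_le _
  _ = _ := by rw [SimpleGraph.Walk.length_append, hp, hq]

private lemma kIDS_exists_dist_eq {V : Type} {G : SimpleGraph V} {u v : V}
    (hr : G.Reachable u v) {i : ℕ} (hi : i ≤ G.dist u v) :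
    ∃ w, G.dist u w = i ∧ G.Reachable u w := by
  obtain ⟨p, hp⟩ := hr.exists_walk_length_eq_dist
  obtain ⟨w, q, r, hq, hqr⟩ := kIDS_walk_split p i (by omega)
  have h1 : G.dist u w ≤ i := hq ▸ SimpleGraph.dist_le q
  have h2 : G.dist w v ≤ r.length := SimpleGraph.dist_le r
  have h3 : G.dist u v ≤ G.dist u w + G.dist w v := kIDS_dist_triangle ⟨q⟩ ⟨r⟩
  exact ⟨w, by omega, ⟨q⟩⟩

/-- If `D` is a `k`-independent dominating set of a finite graph `G` with `n`
vertices and `c` connected components, and `k' = ⌊k/2⌋ ≥ 1`, then `|D| ≤ n/k' + c`. -/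
theorem kIndepDomSet_card_le {V : Type} [Fintype V] (G : SimpleGraph V)
    (k : ℕ) (hk : 2 ≤ k) (D : Finset V)
    (hdom : ∀ v : V, ∃ d ∈ D, G.edist v d ≤ (k : ℕ∞))
    (hind : ∀ d ∈ D, ∀ d' ∈ D, d ≠ d' → (k : ℕ∞) + 1 ≤ G.edist d d') :
    (D.card : ℚ) ≤ (Fintype.card V : ℚ) / ((k / 2 : ℕ) : ℚ)
      + (Nat.card G.ConnectedComponent : ℚ) := by
  classical
  set k' := k / 2 with hk'
  have hk'pos : 1 ≤ k' := by omega
  -- the ball of radius k' around a vertex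
  set ball : V → Finset V :=
    fun d => Finset.univ.filter fun v => G.Reachable d v ∧ G.dist d v ≤ k' with hball
  -- edist facts for reachable pairs
  have hedist : ∀ u v : V, G.Reachable u v → G.edist u v = (G.dist u v : ℕ∞) := by
    intro u v hr
    obtain ⟨p⟩ := hr
    have : G.edist u v ≠ ⊤ :=
      (lt_of_le_of_lt p.edist_le (ENat.coe_lt_top p.length)).ne
    exact (ENat.coe_toNat this).symm
  -- distinct elements of D have graph distance > k (in particular > 2k')
  have hfar : ∀ d ∈ D, ∀ d' ∈ D, d ≠ d' → G.Reachable d d' → ¬ G.dist d d' ≤ k := by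
    intro d hd d' hd' hne hr hle
    have h1 := hind d hd d' hd' hne
    rw [hedist d d' hr] at h1
    have : ((k : ℕ) : ℕ∞) + 1 ≤ (k : ℕ∞) := le_trans h1 (by exact_mod_cast hle)
    have h2 : (k : ℕ) + 1 ≤ k := by exact_mod_cast this
    omega
  -- the balls are pairwise disjoint
  have hdisj : ∀ d ∈ D, ∀ d' ∈ D, d ≠ d' → Disjoint (ball d) (ball d') := by
    intro d hd d' hd' hne
    rw [Finset.disjoint_left]
    intro v hv hv'
    rw [hball, Finset.mem_filter] at hv hv'
    obtain ⟨-, hr1, hle1⟩ := hv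
    obtain ⟨-, hr2, hle2⟩ := hv'
    have hr : G.Reachable d d' := hr1.trans hr2.symm
    apply hfar d hd d' hd' hne hr
    have := kIDS_dist_triangle hr1 hr2.symm
    have : G.dist d d' ≤ k' + k' := by
      have := SimpleGraph.dist_comm (G := G) (u := d') (v := v)
      omega
    omega
  -- a vertex whose component reaches beyond radius k' has a big ball
  have hbig : ∀ d u : V, G.Reachable d u → k' < G.dist d u → k' + 1 ≤ (ball d).card := by
    intro d u hr hu
    have H : ∀ i : ℕ, ∃ w, i ≤ k' → G.dist d w = i ∧ G.Reachable d w := by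
      intro i
      by_cases h : i ≤ k'
      · obtain ⟨w, hw1, hw2⟩ := kIDS_exists_dist_eq hr (i := i) (by omega)
        exact ⟨w, fun _ => ⟨hw1, hw2⟩⟩
      · exact ⟨d, fun h' => absurd h' h⟩
    choose f hf using H
    have := Finset.card_le_card_of_injOn f
      (s := Finset.range (k' + 1)) (t := ball d)
      (by
        intro i hi
        rw [Finset.mem_coe, Finset.mem_range] at hi
        obtain ⟨h1, h2⟩ := hf i (by omega)
        rw [hball, Finset.mem_coe, Finset.mem_filter]
        exact ⟨Finset.mem_univ _, h2, by omega⟩)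
      (by
        intro i hi j hj hij
        rw [Finset.coe_range, Set.mem_Iio] at hi hj
        have h1 := (hf i (by omega)).1
        have h2 := (hf j (by omega)).1
        rw [hij] at h1; omega)
    simpa using this
  -- split D into vertices with big and small balls
  set s := D.filter (fun d => k' ≤ (ball d).card) with hs
  set t := D.filter (fun d => ¬ k' ≤ (ball d).card) with ht
  have hst : s.card + t.card = D.card := Finset.card_filter_add_card_filter_not _
  -- counting big balls
  have hscount : s.card * k' ≤ Fintype.card V := by
    have h1 : s.card * k' = ∑ _d ∈ s, k' := by rw [Finset.sum_const, smul_eq_mul]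
    have h2 : ∑ _d ∈ s, k' ≤ ∑ d ∈ s, (ball d).card := by
      apply Finset.sum_le_sum
      intro d hd
      rw [hs, Finset.mem_filter] at hd
      exact hd.2
    have h3 : ∑ d ∈ s, (ball d).card = (s.biUnion ball).card := by
      rw [Finset.card_biUnion]
      intro d hd d' hd' hne
      simp only [hs, Finset.mem_coe, Finset.mem_filter] at hd hd'
      exact hdisj d hd.1 d' hd'.1 hne
    have h4 : (s.biUnion ball).card ≤ Fintype.card V := by
      rw [← Finset.card_univ]
      exact Finset.card_le_card (Finset.subset_univ _)
    omega
  -- small-ball vertices map injectively to connected components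
  have htcount : t.card ≤ Nat.card G.ConnectedComponent := by
    rw [Nat.card_eq_fintype_card, ← Finset.card_univ]
    apply Finset.card_le_card_of_injOn (fun d => G.connectedComponentMk d)
      (fun _ _ => Finset.mem_univ _)
    intro d hd d' hd' heq
    rw [Finset.mem_coe, ht, Finset.mem_filter] at hd hd'
    by_contra hne
    have hr : G.Reachable d d' := SimpleGraph.ConnectedComponent.exact heq
    by_cases hle : G.dist d d' ≤ k'
    · exact hfar d hd.1 d' hd'.1 hne hr (by omega)
    · have := hbig d d' hr (by omega)
      exact hd.2 (by omega)
  -- conclude by rational arithmetic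
  have hk'Q : (0 : ℚ) < (k' : ℚ) := by exact_mod_cast hk'pos
  have hsQ : (s.card : ℚ) ≤ (Fintype.card V : ℚ) / (k' : ℚ) := by
    rw [le_div_iff₀ hk'Q]
    exact_mod_cast hscount
  have htQ : (t.card : ℚ) ≤ (Nat.card G.ConnectedComponent : ℚ) := by exact_mod_cast htcount
  have hD : (D.card : ℚ) = (s.card : ℚ) + (t.card : ℚ) := by exact_mod_cast hst.symm
  rw [hD]
  exact add_le_add hsQ htQ
end

section
/- The price of anarchy of the SGG is at most n/⌊k/2⌋ + 1: for any k-independent dominating set D and any k-dominating set D* of a finite graph G with n vertices and c components, |D| ≤ (n/⌊k/2⌋ + 1)·|D*|, assuming k ≥ 2. -/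
open SimpleGraph

/-- If some vertex is at (finite) distance `n` from `d`, then for every `i ≤ n`
there is a vertex at distance exactly `i` from `d`. -/
lemma exists_edist_eq_aux {V : Type} (G : SimpleGraph V) (d : V) :
    ∀ n : ℕ, ∀ v : V, G.edist d v = (n : ℕ∞) → ∀ i : ℕ, i ≤ n →
      ∃ u, G.edist d u = (i : ℕ∞) := by
  intro n
  induction n with
  | zero =>
    intro v _ i hi
    interval_cases i
    exact ⟨d, by simp [SimpleGraph.edist_self]⟩
  | succ n ih =>
    intro v h i hi
    rcases Nat.lt_or_ge i (n + 1) with hlt | hge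
    · obtain ⟨p, hp⟩ := SimpleGraph.exists_walk_of_edist_eq_coe h
      cases p with
      | nil => simp at hp
      | cons hadj q =>
        obtain ⟨x, r, hxv, hc⟩ := SimpleGraph.Walk.exists_cons_eq_concat hadj q
        have hlen : r.length + 1 = n + 1 := by
          have := hp
          rw [hc] at this
          simpa [SimpleGraph.Walk.length_concat] using this
        have hrn : r.length = n := by omega
        have h1 : G.edist d x ≤ (n : ℕ∞) := by
          calc G.edist d x ≤ r.length := SimpleGraph.edist_le r
            _ = (n : ℕ∞) := by exact_mod_cast congrArg Nat.cast hrn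
        obtain ⟨N, hNn, hNeq⟩ : ∃ N : ℕ, N ≤ n ∧ G.edist d x = (N : ℕ∞) := by
          have hne : G.edist d x ≠ ⊤ := by
            intro ht; rw [ht] at h1; exact absurd h1 (by simp)
          lift G.edist d x to ℕ using hne with N hN
          exact ⟨N, by exact_mod_cast h1, rfl⟩
        have hxv1 : G.edist x v ≤ (1 : ℕ∞) := by
          have := SimpleGraph.edist_le hxv.toWalk
          simpa using this
        have hNge : n ≤ N := by
          have htri : G.edist d v ≤ G.edist d x + G.edist x v := SimpleGraph.edist_triangle
          rw [h, hNeq] at htri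
          have : ((n + 1 : ℕ) : ℕ∞) ≤ ((N + 1 : ℕ) : ℕ∞) := by
            calc ((n + 1 : ℕ) : ℕ∞) = ((n : ℕ) : ℕ∞) + 1 := by push_cast; ring
              _ ≤ (N : ℕ∞) + G.edist x v := le_trans htri (le_rfl)
              _ ≤ (N : ℕ∞) + 1 := add_le_add (le_refl _) hxv1
              _ = ((N + 1 : ℕ) : ℕ∞) := by push_cast; ring
          have := (Nat.cast_le (α := ℕ∞)).mp this
          omega
        have hNn' : N = n := le_antisymm hNn hNge
        exact ih x (by rw [hNeq, hNn']) i (by omega)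
    · have : i = n + 1 := by omega
      exact ⟨v, by rw [this]; exact_mod_cast h⟩

/-- PoA upper bound for the SGG: for any `k`-independent dominating set `D`
(a Nash equilibrium) and any `k`-dominating set `D*` (an arbitrary feasible
configuration, in particular the optimum), `|D| ≤ (n/⌊k/2⌋ + 1)·|D*|`. -/
theorem sgg_poa_upper {V : Type} [Fintype V] (G : SimpleGraph V)
    (k : ℕ) (hk : 2 ≤ k) (D Dstar : Finset V)
    (hdom : ∀ v : V, ∃ d ∈ D, G.edist v d ≤ (k : ℕ∞))
    (hind : ∀ d ∈ D, ∀ d' ∈ D, d ≠ d' → (k : ℕ∞) + 1 ≤ G.edist d d')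
    (hdomstar : ∀ v : V, ∃ d ∈ Dstar, G.edist v d ≤ (k : ℕ∞)) :
    (D.card : ℚ) ≤ ((Fintype.card V : ℚ) / ((k / 2 : ℕ) : ℚ) + 1) * Dstar.card := by
  classical
  set m : ℕ := k / 2 with hm
  have hm1 : 1 ≤ m := by omega
  have h2m : 2 * m ≤ k := by omega
  set n : ℕ := Fintype.card V with hn
  -- the balls of radius m around vertices
  set B : V → Finset V := fun d => Finset.univ.filter (fun u => G.edist d u ≤ (m : ℕ∞))
    with hB
  -- balls around distinct vertices of D are disjoint
  have hdisj : ∀ d ∈ D, ∀ d' ∈ D, d ≠ d' → Disjoint (B d) (B d') := by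
    intro d hd d' hd' hne
    rw [Finset.disjoint_left]
    intro u hu hu'
    simp only [hB, Finset.mem_filter] at hu hu'
    have htri : G.edist d d' ≤ G.edist d u + G.edist u d' := SimpleGraph.edist_triangle
    have h1 : G.edist u d' ≤ (m : ℕ∞) := by rw [SimpleGraph.edist_comm]; exact hu'.2
    have h2 : G.edist d d' ≤ ((2 * m : ℕ) : ℕ∞) := by
      calc G.edist d d' ≤ G.edist d u + G.edist u d' := htri
        _ ≤ (m : ℕ∞) + (m : ℕ∞) := add_le_add hu.2 h1
        _ = ((2 * m : ℕ) : ℕ∞) := by push_cast; ring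
    have h3 : (k : ℕ∞) + 1 ≤ G.edist d d' := hind d hd d' hd' hne
    have h4 : ((k + 1 : ℕ) : ℕ∞) ≤ ((2 * m : ℕ) : ℕ∞) := by
      calc ((k + 1 : ℕ) : ℕ∞) = (k : ℕ∞) + 1 := by push_cast; ring
        _ ≤ G.edist d d' := h3
        _ ≤ ((2 * m : ℕ) : ℕ∞) := h2
    have := (Nat.cast_le (α := ℕ∞)).mp h4
    omega
  -- "big" vertices of D: those with some vertex at finite distance > m
  set big : V → Prop := fun d => ∃ v, G.edist d v ≠ ⊤ ∧ (m : ℕ∞) < G.edist d v with hbig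
  set Db : Finset V := D.filter (fun d => big d) with hDb
  set Ds : Finset V := D.filter (fun d => ¬ big d) with hDs
  have hsplit : Db.card + Ds.card = D.card := by
    rw [hDb, hDs]
    exact Finset.card_filter_add_card_filter_not ..
  -- each big ball has at least m+1 elements
  have hbigcard : ∀ d ∈ Db, m + 1 ≤ (B d).card := by
    intro d hd
    simp only [hDb, Finset.mem_filter] at hd
    obtain ⟨v, hvne, hvgt⟩ := hd.2
    obtain ⟨N, hNeq⟩ : ∃ N : ℕ, G.edist d v = (N : ℕ∞) := by
      lift G.edist d v to ℕ using hvne with N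
      exact ⟨N, rfl⟩
    have hmN : m < N := by
      rw [hNeq] at hvgt; exact_mod_cast hvgt
    -- choose a vertex at each distance i ≤ m
    have hex : ∀ i : ℕ, ∃ u, i ≤ m → G.edist d u = (i : ℕ∞) := by
      intro i
      by_cases hi : i ≤ m
      · obtain ⟨u, hu⟩ := exists_edist_eq_aux G d N v hNeq i (by omega)
        exact ⟨u, fun _ => hu⟩
      · exact ⟨d, fun h => absurd h hi⟩
    choose f hf using hex
    have : (Finset.range (m + 1)).card ≤ (B d).card := by
      apply Finset.card_le_card_of_injOn f
      · intro i hi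
        simp only [Finset.mem_coe, Finset.mem_range] at hi
        have him : i ≤ m := by omega
        simp only [hB, Finset.mem_coe, Finset.mem_filter]
        exact ⟨Finset.mem_univ _, le_of_eq (hf i him) |>.trans (by exact_mod_cast Nat.cast_le.mpr him)⟩
      · intro i hi j hj heq
        simp only [Finset.mem_coe, Finset.mem_range] at hi hj
        have h1 := hf i (by omega)
        have h2 := hf j (by omega)
        rw [heq, h2] at h1
        exact_mod_cast h1.symm
    simpa using this
  -- big vertices are few: (m+1) * |Db| ≤ n
  have hbcount : (m + 1) * Db.card ≤ n := by
    have hsub : Db.biUnion B ⊆ Finset.univ := Finset.subset_univ _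
    have hcard : (Db.biUnion B).card ≤ n := by
      simpa [hn] using Finset.card_le_card hsub
    have hunion : (m + 1) * Db.card ≤ (Db.biUnion B).card := by
      rw [Finset.card_biUnion]
      · calc (m + 1) * Db.card = Db.card * (m + 1) := by ring
          _ = ∑ _d ∈ Db, (m + 1) := by rw [Finset.sum_const, smul_eq_mul]
          _ ≤ ∑ d ∈ Db, (B d).card := Finset.sum_le_sum hbigcard
      · intro d hd d' hd' hne
        exact hdisj d (Finset.mem_filter.mp hd).1 d' (Finset.mem_filter.mp hd').1 hne
    omega
  -- small vertices inject into Dstar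
  have hscount : Ds.card ≤ Dstar.card := by
    have hchoice : ∀ d ∈ Ds, ∃ d' ∈ Dstar, G.edist d d' ≤ (m : ℕ∞) := by
      intro d hd
      simp only [hDs, Finset.mem_filter] at hd
      obtain ⟨d', hd', hdd'⟩ := hdomstar d
      refine ⟨d', hd', ?_⟩
      have hfin : G.edist d d' ≠ ⊤ := by
        intro ht; rw [ht] at hdd'
        exact absurd hdd' (by simp)
      by_contra hgt
      exact hd.2 ⟨d', hfin, lt_of_not_ge hgt⟩
    choose g hg1 hg2 using hchoice
    apply Finset.card_le_card_of_injOn (fun d => if h : d ∈ Ds then g d h else d)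
    · intro d hd; simp only [Finset.mem_coe] at hd; simp only [hd, dif_pos]; exact hg1 d hd
    · intro d hd d' hd' heq
      simp only [Finset.mem_coe] at hd hd'
      simp only [hd, hd', dif_pos] at heq
      by_contra hne
      have hdD : d ∈ D := (Finset.mem_filter.mp hd).1
      have hdD' : d' ∈ D := (Finset.mem_filter.mp hd').1
      have hmem1 : g d hd ∈ B d := by
        simp only [hB, Finset.mem_filter]; exact ⟨Finset.mem_univ _, hg2 d hd⟩
      have hmem2 : g d hd ∈ B d' := by
        simp only [hB, Finset.mem_filter]
        refine ⟨Finset.mem_univ _, ?_⟩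
        rw [heq]; exact hg2 d' hd'
      exact Finset.disjoint_left.mp (hdisj d hdD d' hdD' hne) hmem1 hmem2
  -- now the arithmetic
  by_cases hDe : D = ∅
  · subst hDe
    simp only [Finset.card_empty, Nat.cast_zero]
    have h1 : (0 : ℚ) ≤ (n : ℚ) / (m : ℚ) := by positivity
    have h2 : (0 : ℚ) ≤ (Dstar.card : ℚ) := by positivity
    nlinarith
  · -- Dstar is nonempty
    obtain ⟨d0, hd0⟩ := Finset.nonempty_of_ne_empty hDe
    obtain ⟨d1, hd1, _⟩ := hdomstar d0
    have hs1 : 1 ≤ Dstar.card := Finset.card_pos.mpr ⟨d1, hd1⟩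
    have hmq : (0 : ℚ) < (m : ℚ) := by exact_mod_cast hm1
    have hb : (Db.card : ℚ) ≤ (n : ℚ) / (m : ℚ) := by
      rw [le_div_iff₀ hmq]
      have : (m : ℚ) * Db.card ≤ (m + 1 : ℚ) * Db.card := by
        have : (0 : ℚ) ≤ (Db.card : ℚ) := by positivity
        nlinarith
      calc (Db.card : ℚ) * (m : ℚ) = (m : ℚ) * Db.card := by ring
        _ ≤ (m + 1 : ℚ) * Db.card := this
        _ ≤ (n : ℚ) := by exact_mod_cast hbcount
    have hsq : (1 : ℚ) ≤ (Dstar.card : ℚ) := by exact_mod_cast hs1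
    have hcards : (D.card : ℚ) = (Ds.card : ℚ) + (Db.card : ℚ) := by
      have : Db.card + Ds.card = D.card := hsplit
      push_cast [← this]; ring
    have hsq2 : (Ds.card : ℚ) ≤ (Dstar.card : ℚ) := by exact_mod_cast hscount
    have hnn : (0 : ℚ) ≤ (n : ℚ) / (m : ℚ) := by positivity
    calc (D.card : ℚ) = (Ds.card : ℚ) + (Db.card : ℚ) := hcards
      _ ≤ (Dstar.card : ℚ) + (n : ℚ) / (m : ℚ) := add_le_add hsq2 hb
      _ ≤ (Dstar.card : ℚ) + ((n : ℚ) / (m : ℚ)) * (Dstar.card : ℚ) := by nlinarith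
      _ = ((n : ℚ) / (m : ℚ) + 1) * (Dstar.card : ℚ) := by ring
end

section
/- In the graph G_{k,m} (two adjacent centers each with m attached arms that are paths on k vertices), every k-independent dominating set has size at least m. -/
/-- The graph `G_{k,m}`: two adjacent centers (`Sum.inl 0` and `Sum.inl 1`);
for each `c : Fin 2`, `m` arms, each a path on `k` vertices, with the `0`-th
vertex of each arm adjacent to center `c`. -/
def armGraph (k m : ℕ) : SimpleGraph (Fin 2 ⊕ Fin 2 × Fin m × Fin k) :=
  SimpleGraph.fromRel (fun x y =>
    (x = Sum.inl 0 ∧ y = Sum.inl 1) ∨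
    (∃ c j i, x = Sum.inl c ∧ y = Sum.inr (c, j, i) ∧ (i : ℕ) = 0) ∨
    (∃ c j i i', x = Sum.inr (c, j, i) ∧ y = Sum.inr (c, j, i') ∧
      (i' : ℕ) = (i : ℕ) + 1))

/-- walk length bounds potential difference for 1-Lipschitz f -/
lemma lipschitz_walk {V : Type*} {G : SimpleGraph V} (f : V → ℤ)
    (hf : ∀ x y, G.Adj x y → |f x - f y| ≤ 1) {u v : V} (p : G.Walk u v) :
    f u - f v ≤ p.length := by
  induction p with
  | nil => simp
  | cons h p ih =>
    have := hf _ _ h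
    simp only [SimpleGraph.Walk.length_cons]
    push_cast
    have h1 := abs_le.mp this
    omega

lemma lipschitz_edist {V : Type*} {G : SimpleGraph V} (f : V → ℤ)
    (hf : ∀ x y, G.Adj x y → |f x - f y| ≤ 1) {u v : V} {k : ℕ}
    (h : G.edist u v ≤ (k : ℕ∞)) : f u - f v ≤ k := by
  have hne : G.edist u v ≠ ⊤ := by
    intro ht; rw [ht] at h; exact (ENat.coe_lt_top k).not_ge h
  obtain ⟨p, hp⟩ := SimpleGraph.exists_walk_of_edist_ne_top hne
  have hlen : (p.length : ℕ∞) ≤ (k : ℕ∞) := hp ▸ h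
  have : p.length ≤ k := by exact_mod_cast hlen
  calc f u - f v ≤ p.length := lipschitz_walk f hf p
    _ ≤ k := by exact_mod_cast this

/-- Every `k`-independent dominating set of `G_{k,m}` has size at least `m`. -/
theorem armGraph_kIndepDomSet_ge (k m : ℕ) (hk : 1 ≤ k) (hm : 1 ≤ m)
    (D : Finset (Fin 2 ⊕ Fin 2 × Fin m × Fin k))
    (hdom : ∀ v, ∃ d ∈ D, (armGraph k m).edist v d ≤ (k : ℕ∞))
    (hind : ∀ d ∈ D, ∀ d' ∈ D, d ≠ d' → (k : ℕ∞) + 1 ≤ (armGraph k m).edist d d') :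
    m ≤ D.card := by
  -- at most one center in D
  have hcenter : ∃ c : Fin 2, Sum.inl c ∉ D := by
    by_contra hc
    push_neg at hc
    have hadj : (armGraph k m).Adj (Sum.inl 0) (Sum.inl 1) := by
      rw [armGraph, SimpleGraph.fromRel_adj]
      exact ⟨by simp, Or.inl (Or.inl ⟨rfl, rfl⟩)⟩
    have h1 := hind _ (hc 0) _ (hc 1) (by simp)
    have h2 : (armGraph k m).edist (Sum.inl 0) (Sum.inl 1) ≤ 1 := by
      simpa using (armGraph k m).edist_le hadj.toWalk
    have h3 : ((k + 1 : ℕ) : ℕ∞) ≤ ((1 : ℕ) : ℕ∞) := by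
      push_cast
      exact h1.trans h2
    have := Nat.cast_le.mp h3
    omega
  obtain ⟨c, hc⟩ := hcenter
  -- key: each arm (c, j) contains an element of D
  have key : ∀ j : Fin m, ∃ d ∈ D, ∃ i, d = Sum.inr (c, j, i) := by
    intro j
    set w : Fin 2 ⊕ Fin 2 × Fin m × Fin k := Sum.inr (c, j, ⟨k - 1, by omega⟩) with hw
    obtain ⟨d, hd, hdist⟩ := hdom w
    refine ⟨d, hd, ?_⟩
    -- potential function
    set f : (Fin 2 ⊕ Fin 2 × Fin m × Fin k) → ℤ := fun x =>
      match x with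
      | Sum.inl c' => if c' = c then 0 else -1
      | Sum.inr (c', j', i) => if c' = c ∧ j' = j then (i : ℤ) + 1 else -1 with hfdef
    have hf : ∀ x y, (armGraph k m).Adj x y → |f x - f y| ≤ 1 := by
      intro x y hxy
      obtain ⟨-, hr | hr⟩ := hxy <;>
      · rcases hr with ⟨hx, hy⟩ | ⟨c', j', i, hx, hy, hi⟩ | ⟨c', j', i, i', hx, hy, hi⟩ <;>
          subst hx <;> subst hy <;> simp only [hfdef] <;> split_ifs <;>
          first
          | (exfalso; tauto)
          | (rw [abs_le]; constructor <;> omega)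
    have hfw : f w = k := by
      show (if c = c ∧ j = j then (((⟨k - 1, by omega⟩ : Fin k) : ℕ) : ℤ) + 1 else -1) = k
      rw [if_pos ⟨rfl, rfl⟩]
      simp only [Fin.val_mk]
      omega
    have hbound : f w - f d ≤ k := lipschitz_edist f hf hdist
    have hfd : 0 ≤ f d := by omega
    rcases d with c' | ⟨c', j', i⟩
    · exfalso
      by_cases h : c' = c
      · exact hc (h ▸ hd)
      · simp only [hfdef, if_neg h] at hfd; omega
    · by_cases h : c' = c ∧ j' = j
      · obtain ⟨h1, h2⟩ := h; subst h1; subst h2; exact ⟨i, rfl⟩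
      · exfalso; simp only [hfdef, if_neg h] at hfd; omega
  -- choose for each j an element of D
  choose d hdD i hdi using key
  have hinj : Function.Injective d := by
    intro j j' h
    rw [hdi j, hdi j'] at h
    simp only [Sum.inr.injEq, Prod.mk.injEq, true_and] at h
    exact h.1
  calc m = (Finset.univ : Finset (Fin m)).card := by simp
    _ ≤ D.card := Finset.card_le_card_of_injOn d (fun j _ => hdD j) (hinj.injOn)
end

section
/- The price of stability of the SGG is Ω(n/k): for all k, m ≥ 1 there is a graph with n = 2mk + 2 vertices on which the minimum size of a k-dominating set is at most 2 while the minimum size of a k-independent dominating set is at least m. -/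
namespace SGGAux

abbrev Vmk (m k : ℕ) : Type := Bool ⊕ (Bool × Fin m × Fin k)

def rel (m k : ℕ) : Vmk m k → Vmk m k → Prop
  | Sum.inl _, Sum.inl _ => True
  | Sum.inl b, Sum.inr (b', _, j) => b = b' ∧ j.val = 0
  | Sum.inr (b, i, j), Sum.inr (b', i', j') => b = b' ∧ i = i' ∧ j'.val = j.val + 1
  | _, _ => False

def Gmk (m k : ℕ) : SimpleGraph (Vmk m k) := SimpleGraph.fromRel (rel m k)

lemma walk_lip {V : Type} {G : SimpleGraph V} (f : V → ℕ)
    (hf : ∀ a b, G.Adj a b → f a ≤ f b + 1) {u v : V} (p : G.Walk u v) :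
    f u ≤ f v + p.length := by
  induction p with
  | nil => simp
  | cons h p ih =>
      have := hf _ _ h
      simp only [SimpleGraph.Walk.length_cons]
      omega

lemma edist_lip {V : Type} {G : SimpleGraph V} (f : V → ℕ)
    (hf : ∀ a b, G.Adj a b → f a ≤ f b + 1) (u v : V) :
    (f u : ℕ∞) ≤ f v + G.edist u v := by
  rcases eq_or_ne (G.edist u v) ⊤ with h | h
  · simp [h]
  · obtain ⟨p, hp⟩ := SimpleGraph.exists_walk_of_edist_ne_top h
    rw [← hp]
    have := walk_lip f hf p
    exact_mod_cast Nat.cast_le.mpr this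

lemma arm_edist (m k : ℕ) (b : Bool) (i : Fin m) :
    ∀ (n : ℕ) (hn : n < k),
      (Gmk m k).edist (Sum.inr (b, i, ⟨n, hn⟩)) (Sum.inl b) ≤ ((n + 1 : ℕ) : ℕ∞) := by
  intro n
  induction n with
  | zero =>
      intro hn
      have hadj : (Gmk m k).Adj (Sum.inr (b, i, ⟨0, hn⟩)) (Sum.inl b) := by
        rw [Gmk, SimpleGraph.fromRel_adj]
        exact ⟨by simp, Or.inr ⟨rfl, rfl⟩⟩
      rw [SimpleGraph.edist_eq_one_iff_adj.mpr hadj]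
      exact_mod_cast Nat.one_le_iff_ne_zero.mpr one_ne_zero
  | succ n ih =>
      intro hn
      have hn' : n < k := by omega
      have hadj : (Gmk m k).Adj (Sum.inr (b, i, ⟨n + 1, hn⟩)) (Sum.inr (b, i, ⟨n, hn'⟩)) := by
        rw [Gmk, SimpleGraph.fromRel_adj]
        refine ⟨by simp, Or.inr ⟨rfl, rfl, rfl⟩⟩
      calc (Gmk m k).edist (Sum.inr (b, i, ⟨n + 1, hn⟩)) (Sum.inl b)
          ≤ (Gmk m k).edist (Sum.inr (b, i, ⟨n + 1, hn⟩)) (Sum.inr (b, i, ⟨n, hn'⟩)) +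
            (Gmk m k).edist (Sum.inr (b, i, ⟨n, hn'⟩)) (Sum.inl b) :=
            SimpleGraph.edist_triangle
        _ ≤ 1 + ((n + 1 : ℕ) : ℕ∞) := by
            gcongr
            · exact le_of_eq (SimpleGraph.edist_eq_one_iff_adj.mpr hadj)
            · exact ih hn'
        _ = ((n + 1 + 1 : ℕ) : ℕ∞) := by push_cast; ring

def f (m k : ℕ) (b : Bool) (i : Fin m) : Vmk m k → ℕ
  | Sum.inl b' => if b' = b then k else k + 1
  | Sum.inr (b', i', j) =>
      if b' = b ∧ i' = i then k - 1 - j.val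
      else if b' = b then k + 1 + j.val else k + 2 + j.val

lemma f_lip (m k : ℕ) (b : Bool) (i : Fin m) :
    ∀ a c, (Gmk m k).Adj a c → f m k b i a ≤ f m k b i c + 1 := by
  intro a c hac
  rw [Gmk, SimpleGraph.fromRel_adj] at hac
  obtain ⟨hne, hr⟩ := hac
  rcases a with a | ⟨ba, ia, ja⟩ <;> rcases c with c | ⟨bc, ic, jc⟩
  · simp only [f]; split_ifs <;> omega
  · -- center to arm: rel gives a = bc ∧ jc = 0 (other direction is False)
    simp only [rel] at hr
    rcases hr with ⟨rfl, hj0⟩ | h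
    · simp only [f]
      split_ifs with h1 h2 h3 <;> simp_all <;> omega
    · exact absurd h (by simp)
  · simp only [rel] at hr
    rcases hr with h | ⟨rfl, hj0⟩
    · exact absurd h (by simp)
    · simp only [f]
      split_ifs with h1 h2 h3 <;> simp_all <;> omega
  · simp only [rel] at hr
    have hja := ja.isLt
    have hjc := jc.isLt
    rcases hr with ⟨rfl, rfl, hstep⟩ | ⟨rfl, rfl, hstep⟩ <;>
      · simp only [f]
        split_ifs <;> simp_all <;> omega

def tip (m k : ℕ) (hk : 1 ≤ k) (b : Bool) (i : Fin m) : Vmk m k :=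
  Sum.inr (b, i, ⟨k - 1, by omega⟩)

lemma dominator_loc (m k : ℕ) (hk : 1 ≤ k) (b : Bool) (i : Fin m) (d : Vmk m k)
    (hd : (Gmk m k).edist (tip m k hk b i) d ≤ (k : ℕ∞)) :
    d = Sum.inl b ∨ ∃ j, d = Sum.inr (b, i, j) := by
  have hlip := edist_lip (f m k b i) (f_lip m k b i) d (tip m k hk b i)
  have hft : f m k b i (tip m k hk b i) = 0 := by
    simp only [tip, f, and_self, if_true]
    omega
  rw [hft, SimpleGraph.edist_comm] at hlip
  have hcast : (f m k b i d : ℕ∞) ≤ (k : ℕ∞) := by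
    calc (f m k b i d : ℕ∞) ≤ 0 + (Gmk m k).edist (tip m k hk b i) d := by exact_mod_cast hlip
      _ = (Gmk m k).edist (tip m k hk b i) d := by rw [zero_add]
      _ ≤ (k : ℕ∞) := hd
  have hfd : f m k b i d ≤ k := by exact_mod_cast hcast
  rcases d with b' | ⟨b', i', j⟩
  · left
    by_cases hb : b' = b
    · rw [hb]
    · simp only [f, if_neg hb] at hfd; omega
  · right
    by_cases hc : b' = b ∧ i' = i
    · exact ⟨j, by rw [hc.1, hc.2]⟩
    · exfalso
      simp only [f, if_neg hc] at hfd
      split_ifs at hfd <;> omega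

lemma count (m k : ℕ) (hk : 1 ≤ k) (b₀ : Bool) (D : Finset (Vmk m k))
    (hD : Sum.inl b₀ ∉ D)
    (hdom : ∀ v, ∃ d ∈ D, (Gmk m k).edist v d ≤ (k : ℕ∞)) :
    m ≤ D.card := by
  have key : ∀ i : Fin m, ∃ d ∈ D, ∃ j, d = Sum.inr (b₀, i, j) := by
    intro i
    obtain ⟨d, hdD, hdd⟩ := hdom (tip m k hk b₀ i)
    rcases dominator_loc m k hk b₀ i d hdd with h | ⟨j, hj⟩
    · exact absurd (h ▸ hdD) hD
    · exact ⟨d, hdD, j, hj⟩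
  choose g hgD j hgj using key
  have hinj : Set.InjOn g (Finset.univ : Finset (Fin m)) := by
    intro a _ c _ hac
    have h2 := (hgj a).symm.trans (hac ▸ hgj c)
    simp only [Sum.inr.injEq, Prod.mk.injEq] at h2
    exact h2.2.1
  have := Finset.card_le_card_of_injOn g (fun a _ => hgD a) hinj
  simpa using this

end SGGAux

/-- PoS lower bound `Ω(n/k)` for the SGG: for all `k, m ≥ 1` there is a graph
with `n = 2mk + 2` vertices whose minimum `k`-dominating set has size at most
`2`, while every `k`-independent dominating set (Nash equilibrium) has size at
least `m`. -/
theorem sgg_pos_lower (k m : ℕ) (hk : 1 ≤ k) (hm : 1 ≤ m) :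
    ∃ (V : Type) (_ : Finite V) (G : SimpleGraph V),
      Nat.card V = 2 * m * k + 2 ∧
      (∃ D : Finset V, D.card ≤ 2 ∧ ∀ v, ∃ d ∈ D, G.edist v d ≤ (k : ℕ∞)) ∧
      (∀ D : Finset V, (∀ v, ∃ d ∈ D, G.edist v d ≤ (k : ℕ∞)) →
        (∀ d ∈ D, ∀ d' ∈ D, d ≠ d' → (k : ℕ∞) + 1 ≤ G.edist d d') →
        m ≤ D.card) := by
  refine ⟨SGGAux.Vmk m k, inferInstance, SGGAux.Gmk m k, ?_, ?_, ?_⟩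
  · rw [Nat.card_eq_fintype_card]
    simp only [Fintype.card_sum, Fintype.card_prod, Fintype.card_bool, Fintype.card_fin]
    ring
  · refine ⟨{Sum.inl true, Sum.inl false}, ?_, ?_⟩
    · exact le_trans (Finset.card_insert_le _ _) (by simp)
    · intro v
      rcases v with b | ⟨b, i, j⟩
      · refine ⟨Sum.inl b, by cases b <;> simp, ?_⟩
        rw [SimpleGraph.edist_self]
        exact zero_le
      · refine ⟨Sum.inl b, by cases b <;> simp, ?_⟩
        have := SGGAux.arm_edist m k b i j.val j.isLt
        rw [Fin.eta] at this
        exact le_trans this (by exact_mod_cast Nat.cast_le.mpr j.isLt)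
  · intro D hdom hind
    by_cases hfalse : Sum.inl false ∈ D
    · have htrue : Sum.inl true ∉ D := by
        intro htrue
        have hadj : (SGGAux.Gmk m k).Adj (Sum.inl true) (Sum.inl false) := by
          rw [SGGAux.Gmk, SimpleGraph.fromRel_adj]
          exact ⟨by simp, Or.inl trivial⟩
        have h1 : (SGGAux.Gmk m k).edist (Sum.inl true) (Sum.inl false) = 1 :=
          SimpleGraph.edist_eq_one_iff_adj.mpr hadj
        have h2 := hind _ htrue _ hfalse (by simp)
        rw [h1] at h2
        have : ((k + 1 : ℕ) : ℕ∞) ≤ ((1 : ℕ) : ℕ∞) := by exact_mod_cast h2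
        have := Nat.cast_le.mp this
        omega
      exact SGGAux.count m k hk true D htrue hdom
    · exact SGGAux.count m k hk false D hfalse hdom
end

section
/- In the complete graph K_n with n = m(ξ+1) for integers m ≥ 1, ξ ≥ 1, there exists a Nash equilibrium of the SGG-AC in which exactly m vertices buy a good, each buyer having exactly ξ followers; meanwhile the minimum social cost is p (a single buyer suffices). Hence the price of anarchy of the SGG-AC is at least m = n/(ξ+1). -/
open Classical in
/-- Utility of player `i` in the SGG with access costs (SGG-AC): `s i = i`
means `i` buys a good (getting `b - p` plus `a` per follower), `s i = j ≠ i`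
means `i` wants to rent from `j` (getting `b - a` if `j` indeed buys,
`0` otherwise). -/
noncomputable def utilAC {V : Type} [Fintype V] (G : SimpleGraph V) (k : ℕ)
    (b p a : ℚ) (s : V → V) (i : V) : ℚ :=
  if s i = i then
    b - p + a * (Finset.univ.filter (fun j => j ≠ i ∧ s j = i)).card
  else if s (s i) = s i then b - a
  else 0

lemma edist_top_le_one {V : Type} (i j : V) :
    (⊤ : SimpleGraph V).edist i j ≤ (1 : ℕ∞) := by
  by_cases h : i = j
  · subst h; simp [SimpleGraph.edist_self]
  · exact le_of_eq (SimpleGraph.edist_eq_one_iff_adj.mpr (by simpa using h))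

lemma nat_div_eq_iff_aux {N q j : ℕ} (hN : 0 < N) :
    j / N = q ↔ q * N ≤ j ∧ j < q * N + N := by
  constructor
  · rintro rfl
    exact ⟨Nat.div_mul_le_self j N, Nat.lt_div_mul_add hN⟩
  · rintro ⟨h1, h2⟩
    have ha : q ≤ j / N := (Nat.le_div_iff_mul_le hN).mpr h1
    have hb : j / N < q + 1 := (Nat.div_lt_iff_lt_mul hN).mpr
      (by rw [Nat.add_mul, Nat.one_mul]; omega)
    omega

/-- On the complete graph with `n = m(ξ+1)` vertices (hop parameter `k = 1`),
there is a Nash equilibrium of the SGG-AC with exactly `m` buyers, each with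
exactly `ξ` followers, while there is also a feasible profile with a single
buyer followed by everyone (minimum social cost `p`). Hence PoA `≥ n/(ξ+1)`. -/
theorem sggac_poa_lower_complete (m ξ : ℕ) (hm : 1 ≤ m) (hξ : 1 ≤ ξ)
    (b p a : ℚ) (ha : 0 < a) (hap : a < p) (hpb : p < b)
    (hξ1 : a * ξ < p) (hξ2 : p < a * (ξ + 1)) :
    ∃ s : Fin (m * (ξ + 1)) → Fin (m * (ξ + 1)),
      (∀ i, (⊤ : SimpleGraph (Fin (m * (ξ + 1)))).edist i (s i) ≤ (1 : ℕ∞)) ∧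
      (∀ i t, (⊤ : SimpleGraph (Fin (m * (ξ + 1)))).edist i t ≤ (1 : ℕ∞) →
        utilAC (⊤ : SimpleGraph (Fin (m * (ξ + 1)))) 1 b p a (Function.update s i t) i ≤
          utilAC (⊤ : SimpleGraph (Fin (m * (ξ + 1)))) 1 b p a s i) ∧
      (Finset.univ.filter (fun i => s i = i)).card = m ∧
      (∀ i, s i = i → (Finset.univ.filter (fun j => j ≠ i ∧ s j = i)).card = ξ) ∧
      (∃ s' : Fin (m * (ξ + 1)) → Fin (m * (ξ + 1)),
        (∀ i, (⊤ : SimpleGraph (Fin (m * (ξ + 1)))).edist i (s' i) ≤ (1 : ℕ∞)) ∧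
        (∀ i, s' (s' i) = s' i) ∧
        (Finset.univ.filter (fun i => s' i = i)).card = 1) := by
  set N := ξ + 1 with hNdef
  have hN : 0 < N := Nat.succ_pos _
  have hn : 0 < m * N := Nat.mul_pos hm hN
  have hle : ∀ i : Fin (m * N), i.val / N * N < m * N := fun i =>
    lt_of_le_of_lt (Nat.div_mul_le_self _ _) i.isLt
  set s : Fin (m * N) → Fin (m * N) := fun i => ⟨i.val / N * N, hle i⟩ with hs
  have hsval : ∀ i : Fin (m * N), (s i).val = i.val / N * N := fun i => rfl
  have hidem : ∀ i, s (s i) = s i := by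
    intro i
    apply Fin.ext
    show (i.val / N * N) / N * N = i.val / N * N
    rw [Nat.mul_div_cancel _ hN]
  -- characterization of followers
  have hchar : ∀ i j : Fin (m * N), s i = i →
      (s j = i ↔ i.val ≤ j.val ∧ j.val < i.val + N) := by
    intro i j hi
    have hiv : i.val / N * N = i.val := congrArg Fin.val hi
    rw [Fin.ext_iff, hsval]
    constructor
    · intro h
      have h1 : j.val / N * N ≤ j.val := Nat.div_mul_le_self _ _
      have h2 : j.val < j.val / N * N + N := Nat.lt_div_mul_add hN
      omega
    · rintro ⟨h1, h2⟩
      have : j.val / N = i.val / N := by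
        rw [nat_div_eq_iff_aux hN]
        omega
      rw [this, hiv]
  -- each buyer has exactly ξ followers
  have hfoll : ∀ (i) (hi : s i = i) (inst : DecidablePred fun j => j ≠ i ∧ s j = i),
      (Finset.univ.filter (fun j => j ≠ i ∧ s j = i)).card = ξ := by
    intro i hi inst
    have hbound : ∀ r : Fin ξ, i.val + r.val + 1 < m * N := by
      intro r
      have h2 : i.val < m * N := i.isLt
      have hiv : i.val / N * N = i.val := congrArg Fin.val hi
      have hq : i.val / N < m := by
        rw [Nat.div_lt_iff_lt_mul hN]; omega
      have hr : r.val < ξ := r.isLt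
      have hstep : i.val + N ≤ m * N := by
        calc i.val + N = (i.val / N + 1) * N := by rw [Nat.add_mul, Nat.one_mul, hiv]
        _ ≤ m * N := Nat.mul_le_mul_right N hq
      omega
    have key : (Finset.univ.filter (fun j => j ≠ i ∧ s j = i)).card
        = (Finset.univ : Finset (Fin ξ)).card := by
      refine Finset.card_bij' (fun j hj => (⟨j.val - i.val - 1, by
          simp only [Finset.mem_filter, Finset.mem_univ, true_and] at hj
          have hb2 := (hchar i j hi).mp hj.2
          have hne : j.val ≠ i.val := fun h => hj.1 (Fin.ext h)
          omega⟩ : Fin ξ))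
        (fun r _ => (⟨i.val + r.val + 1, hbound r⟩ : Fin (m * N))) ?_ ?_ ?_ ?_
      · intro j hj
        exact Finset.mem_univ _
      · intro r _
        simp only [Finset.mem_filter, Finset.mem_univ, true_and]
        refine ⟨?_, ?_⟩
        · intro h
          have := congrArg Fin.val h
          simp only at this
          omega
        · rw [hchar i _ hi]
          have := r.isLt
          simp only
          omega
      · intro j hj
        simp only [Finset.mem_filter, Finset.mem_univ, true_and] at hj
        have hb2 := (hchar i j hi).mp hj.2
        have hne : j.val ≠ i.val := fun h => hj.1 (Fin.ext h)
        apply Fin.ext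
        simp only
        omega
      · intro r _
        apply Fin.ext
        simp only
        omega
    rw [key, Finset.card_univ, Fintype.card_fin]
  -- number of buyers is m
  have hbuy : (Finset.univ.filter (fun i => s i = i)).card = m := by
    have hbnd : ∀ q : Fin m, q.val * N < m * N := fun q =>
      (Nat.mul_lt_mul_right hN).mpr q.isLt
    have key : (Finset.univ.filter (fun i => s i = i)).card
        = (Finset.univ : Finset (Fin m)).card := by
      refine Finset.card_bij' (fun i _ => (⟨i.val / N, by
          exact (Nat.div_lt_iff_lt_mul hN).mpr i.isLt⟩ : Fin m))
        (fun q _ => (⟨q.val * N, hbnd q⟩ : Fin (m * N))) ?_ ?_ ?_ ?_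
      · intro i hi
        exact Finset.mem_univ _
      · intro q _
        simp only [Finset.mem_filter, Finset.mem_univ, true_and]
        apply Fin.ext
        show (q.val * N) / N * N = q.val * N
        rw [Nat.mul_div_cancel _ hN]
      · intro i hi
        simp only [Finset.mem_filter, Finset.mem_univ, true_and] at hi
        exact Fin.ext (congrArg Fin.val hi)
      · intro q _
        apply Fin.ext
        show (q.val * N) / N = q.val
        rw [Nat.mul_div_cancel _ hN]
    rw [key, Finset.card_univ, Fintype.card_fin]
  have hξQ : (0:ℚ) ≤ a * (ξ : ℚ) := by positivity
  -- Nash property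
  have hnash : ∀ i t : Fin (m * N),
      utilAC (⊤ : SimpleGraph (Fin (m * N))) 1 b p a (Function.update s i t) i ≤
        utilAC (⊤ : SimpleGraph (Fin (m * N))) 1 b p a s i := by
    intro i t
    by_cases hi : s i = i
    · -- buyer
      have hu : utilAC (⊤ : SimpleGraph (Fin (m * N))) 1 b p a s i
          = b - p + a * ξ := by
        rw [utilAC, if_pos hi, hfoll i hi]
      rw [hu]
      by_cases ht : t = i
      · rw [ht]
        have hupd : Function.update s i i = s := by
          funext j
          by_cases hj : j = i
          · subst hj
            rw [Function.update_self]
            exact hi.symm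
          · rw [Function.update_of_ne hj]
        rw [hupd, hu]
      · have h1 : Function.update s i t i = t := Function.update_self i t s
        rw [utilAC, h1, if_neg ht]
        split
        · have hlt : p < a * ξ + a := by
            have h2 := hξ2
            push_cast at h2
            linarith
          linarith
        · linarith
    · -- renter
      have hss : s (s i) = s i := hidem i
      have hu : utilAC (⊤ : SimpleGraph (Fin (m * N))) 1 b p a s i = b - a := by
        rw [utilAC, if_neg hi, if_pos hss]
      rw [hu]
      by_cases ht : t = i
      · rw [ht]
        have h1 : Function.update s i i i = i := Function.update_self i i s
        rw [utilAC, if_pos h1]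
        have hempty : ∀ (inst : DecidablePred fun j => j ≠ i ∧ Function.update s i i j = i),
            (Finset.univ.filter
            (fun j => j ≠ i ∧ Function.update s i i j = i)) = ∅ := by
          intro inst
          apply Finset.filter_eq_empty_iff.mpr
          intro j _
          rintro ⟨hji, hsj⟩
          rw [Function.update_of_ne hji] at hsj
          apply hi
          have h3 : s (s j) = s j := hidem j
          rw [hsj] at h3
          exact h3
        rw [hempty]
        simp only [Finset.card_empty, Nat.cast_zero, mul_zero, add_zero]
        linarith
      · have h1 : Function.update s i t i = t := Function.update_self i t s
        rw [utilAC, h1, if_neg ht]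
        split
        · exact le_refl _
        · linarith
  refine ⟨s, fun i => edist_top_le_one i (s i), fun i t _ => hnash i t, hbuy,
    fun i hi => hfoll i hi _, ?_⟩
  -- optimum: everyone follows vertex 0
  refine ⟨fun _ => ⟨0, hn⟩, fun i => edist_top_le_one _ _, fun i => rfl, ?_⟩
  have hone : (Finset.univ.filter (fun i : Fin (m * N) => (⟨0, hn⟩ : Fin (m * N)) = i))
      = {(⟨0, hn⟩ : Fin (m * N))} := by
    ext j
    simp [eq_comm]
  rw [hone, Finset.card_singleton]
end

section
/- In any Nash equilibrium of the SGG-AC on a finite graph, any two 'poor owners' (buyers with fewer than ξ followers) are at distance at least k+1 from each other. -/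
/-- In any Nash equilibrium of the SGG-AC, any two poor owners (buyers with
fewer than `ξ` followers) are at distance at least `k + 1`. -/
theorem sggac_poor_owners_far {V : Type} [Fintype V] [DecidableEq V]
    (G : SimpleGraph V) (k ξ : ℕ) (hk : 1 ≤ k) (b p a : ℚ)
    (ha : 0 < a) (hap : a < p) (hpb : p < b)
    (hξ1 : a * ξ < p) (hξ2 : p < a * (ξ + 1))
    (s : V → V) (hvalid : ∀ i, G.edist i (s i) ≤ (k : ℕ∞))
    (hNE : ∀ i t, G.edist i t ≤ (k : ℕ∞) →
      utilAC G k b p a (Function.update s i t) i ≤ utilAC G k b p a s i) :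
    ∀ i j : V, i ≠ j → s i = i → s j = j →
      (Finset.univ.filter (fun l => l ≠ i ∧ s l = i)).card < ξ →
      (Finset.univ.filter (fun l => l ≠ j ∧ s l = j)).card < ξ →
      (k : ℕ∞) + 1 ≤ G.edist i j := by

  intro i j hij hsi hsj hpi hpj
  by_contra hcon
  push_neg at hcon
  have hdist : G.edist i j ≤ (k : ℕ∞) := by
    rcases le_or_gt (G.edist i j) (k : ℕ∞) with h | h
    · exact h
    · exact absurd (Order.add_one_le_of_lt h) (by simpa [add_comm] using hcon.not_ge)
  have hle := hNE i j hdist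
  have hnew : utilAC G k b p a (Function.update s i j) i = b - a := by
    unfold utilAC
    rw [Function.update_self]
    rw [if_neg (Ne.symm hij)]
    rw [Function.update_of_ne (Ne.symm hij), hsj, if_pos rfl]
  have hold : utilAC G k b p a s i
      = b - p + a * (Finset.univ.filter (fun l => l ≠ i ∧ s l = i)).card := by
    unfold utilAC; rw [if_pos hsi]; congr 4; exact Finset.filter_congr_decidable _ _ _
  rw [hnew, hold] at hle
  set c : ℕ := (Finset.univ.filter (fun l => l ≠ i ∧ s l = i)).card with hc
  have hcast : (c : ℚ) + 1 ≤ (ξ : ℚ) := by exact_mod_cast hpi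
  have : a * ((c : ℚ) + 1) ≤ a * ξ := by
    exact mul_le_mul_of_nonneg_left hcast ha.le
  nlinarith
end

section
/- The price of anarchy of the SGG-AC is at most O(n/k + n/ξ): in any Nash equilibrium of the SGG-AC on a graph with n vertices and c components, the number of buyers is at most n/⌊k/2⌋ + n/(ξ+1) + c, while the optimal number of buyers is at least c (for k ≥ 2). -/
lemma sggac_exists_edist_eq {V : Type} (G : SimpleGraph V) (i : V) :
    ∀ (m : ℕ) (v : V), G.edist i v = m → ∀ t ≤ m, ∃ u, G.edist i u = t := by
  intro m
  induction m with
  | zero =>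
    intro v h t ht
    have : t = 0 := Nat.le_zero.mp ht
    exact ⟨v, by rw [this]; exact h⟩
  | succ m ih =>
    intro v h t ht
    rcases Nat.lt_succ_iff_lt_or_eq.mp (Nat.lt_succ_of_le ht) with h' | h'
    · -- t ≤ m : find vertex at distance m
      obtain ⟨p, hp⟩ := SimpleGraph.exists_walk_of_edist_eq_coe h
      have hlen : p.reverse.length = m + 1 := by simp [hp]
      have hnil : ¬ p.reverse.Nil := by
        rw [SimpleGraph.Walk.not_nil_iff_lt_length, hlen]; omega
      set v' := p.reverse.getVert 1 with hv'
      have hadj : G.Adj v v' := SimpleGraph.Walk.adj_snd hnil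
      have hq : (p.reverse.tail).length = m := by
        have := SimpleGraph.Walk.length_tail_add_one hnil
        omega
      have h1 : G.edist i v' ≤ (m : ℕ∞) := by
        have := SimpleGraph.edist_le (p.reverse.tail).reverse
        rwa [SimpleGraph.Walk.length_reverse, hq] at this
      obtain ⟨m', hm'⟩ : ∃ m' : ℕ, G.edist i v' = m' := by
        lift G.edist i v' to ℕ using (h1.trans_lt (by simp)).ne with m' hm'
        exact ⟨m', rfl⟩
      have hm'le : m' ≤ m := by exact_mod_cast hm' ▸ h1
      have h2 : m ≤ m' := by
        have htri := G.edist_triangle (u := i) (v := v') (w := v)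
        have hvv : G.edist v' v = 1 := by
          rw [SimpleGraph.edist_eq_one_iff_adj]; exact hadj.symm
        rw [h, hvv, hm'] at htri
        have : ((m + 1 : ℕ) : ℕ∞) ≤ ((m' + 1 : ℕ) : ℕ∞) := by push_cast; exact htri
        have := Nat.cast_le.mp this
        omega
      have : G.edist i v' = (m : ℕ∞) := by rw [hm']; congr 1; omega
      exact ih v' this t (by omega)
    · exact ⟨v, h' ▸ h⟩

lemma sggac_ball_card {V : Type} [Fintype V] [DecidableEq V] (G : SimpleGraph V)
    (i w : V) (r : ℕ) (h1 : (r : ℕ∞) < G.edist i w) (h2 : G.edist i w ≠ ⊤) :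
    r + 1 ≤ (Finset.univ.filter (fun v => G.edist i v ≤ (r : ℕ∞))).card := by
  obtain ⟨d, hd⟩ : ∃ d : ℕ, G.edist i w = d := by
    lift G.edist i w to ℕ using h2 with d hd
    exact ⟨d, rfl⟩
  have hrd : r < d := by
    rw [hd] at h1; exact_mod_cast h1
  have H : ∀ t : ℕ, t ≤ r → ∃ u, G.edist i u = t := fun t ht =>
    sggac_exists_edist_eq G i d w hd t (by omega)
  classical
  set f : ℕ → V := fun t => if h : t ≤ r then (H t h).choose else i with hf
  have hft : ∀ t ≤ r, G.edist i (f t) = t := by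
    intro t ht
    simp only [hf, dif_pos ht]
    exact (H t ht).choose_spec
  have := Finset.card_le_card_of_injOn f
    (s := Finset.range (r + 1))
    (t := Finset.univ.filter (fun v => G.edist i v ≤ (r : ℕ∞)))
    (by
      intro t ht
      rw [Finset.mem_coe, Finset.mem_range] at ht
      have ht' : t ≤ r := by omega
      simp only [Finset.mem_coe, Finset.mem_filter, Finset.mem_univ, true_and, hft t ht']
      exact_mod_cast Nat.cast_le.mpr ht')
    (by
      intro x hx y hy hxy
      simp only [Finset.coe_range, Set.mem_Iio] at hx hy
      have := hft x (by omega)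
      have := hft y (by omega)
      have : (x : ℕ∞) = (y : ℕ∞) := by rw [← hft x (by omega), ← hft y (by omega), hxy]
      exact_mod_cast this)
  simpa using this



/-- PoA upper bound for the SGG-AC: in any Nash equilibrium, the number of
buyers is at most `n/⌊k/2⌋ + n/(ξ+1) + c`, while any `k`-dominating set (in
particular an optimal set of buyers) has size at least `c`, the number of
connected components. -/
theorem sggac_poa_upper {V : Type} [Fintype V] [DecidableEq V]
    (G : SimpleGraph V) (k ξ : ℕ) (hk : 2 ≤ k) (hξ : 1 ≤ ξ) (b p a : ℚ)
    (ha : 0 < a) (hap : a < p) (hpb : p < b)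
    (hξ1 : a * ξ < p) (hξ2 : p < a * (ξ + 1))
    (s : V → V) (hvalid : ∀ i, G.edist i (s i) ≤ (k : ℕ∞))
    (hNE : ∀ i t, G.edist i t ≤ (k : ℕ∞) →
      utilAC G k b p a (Function.update s i t) i ≤ utilAC G k b p a s i) :
    ((Finset.univ.filter (fun i => s i = i)).card : ℚ) ≤
        (Fintype.card V : ℚ) / ((k / 2 : ℕ) : ℚ)
          + (Fintype.card V : ℚ) / ((ξ : ℚ) + 1)
          + (Nat.card G.ConnectedComponent : ℚ) ∧
      (∀ D : Finset V, (∀ v, ∃ d ∈ D, G.edist v d ≤ (k : ℕ∞)) →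
        Nat.card G.ConnectedComponent ≤ D.card) := by
  have hFin : Finite G.ConnectedComponent :=
    Finite.of_surjective G.connectedComponentMk (fun C => Quot.exists_rep C)
  haveI := Fintype.ofFinite G.ConnectedComponent
  haveI : DecidableEq G.ConnectedComponent := Classical.decEq _
  have hktop : (k : ℕ∞) ≠ ⊤ := by simp
  constructor
  · -- part 1
    set n := Fintype.card V with hn
    set k' := k / 2 with hk'
    have hk'1 : 1 ≤ k' := by omega
    have hk'2 : k' + k' ≤ k := by omega
    set B := Finset.univ.filter (fun i => s i = i) with hB
    set F : V → Finset V := fun i => Finset.univ.filter (fun j => j ≠ i ∧ s j = i) with hF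
    -- NE: a buyer with another buyer within distance k is rich
    have key : ∀ i, s i = i → ∀ j, s j = j → j ≠ i → G.edist i j ≤ (k : ℕ∞) →
        ξ ≤ (F i).card := by
      intro i hsi j hsj hji hdist
      have hne := hNE i j hdist
      have hL : utilAC G k b p a (Function.update s i j) i = b - a := by
        have h1 : Function.update s i j i = j := Function.update_self i j s
        have h2 : Function.update s i j j = j := by
          rw [Function.update_of_ne hji]; exact hsj
        rw [utilAC, h1, if_neg hji, h2, if_pos rfl]
      have hR : utilAC G k b p a s i = b - p + a * (F i).card := by
        rw [utilAC, if_pos hsi, Finset.filter_congr_decidable, hF]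
      rw [hL, hR] at hne
      by_contra hcon
      push_neg at hcon
      have hcard : ((F i).card : ℚ) + 1 ≤ (ξ : ℚ) := by exact_mod_cast hcon
      nlinarith [hne, hξ1, ha]
    set R := B.filter (fun i => ξ ≤ (F i).card) with hR
    set P := B.filter (fun i => ¬ ξ ≤ (F i).card) with hP
    have hBRP : R.card + P.card = B.card :=
      Finset.card_filter_add_card_filter_not (fun i => ξ ≤ (F i).card)
    -- rich bound
    have hInotF : ∀ i, i ∉ F i := by
      intro i hi
      simp [hF] at hi
    have hrich : R.card * (ξ + 1) ≤ n := by
      have hdisj : ∀ x ∈ R, ∀ y ∈ R, x ≠ y →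
          Disjoint (insert x (F x)) (insert y (F y)) := by
        intro x hx y hy hxy
        have hsx : s x = x := (Finset.mem_filter.mp (Finset.mem_filter.mp hx).1).2
        have hsy : s y = y := (Finset.mem_filter.mp (Finset.mem_filter.mp hy).1).2
        rw [Finset.disjoint_left]
        intro v hv hv'
        rcases Finset.mem_insert.mp hv with rfl | hvF
        · rcases Finset.mem_insert.mp hv' with rfl | hvF'
          · exact hxy rfl
          · have := (Finset.mem_filter.mp hvF').2.2
            rw [hsx] at this
            exact hxy this
        · have hx1 := (Finset.mem_filter.mp hvF).2
          rcases Finset.mem_insert.mp hv' with rfl | hvF'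
          · rw [hsy] at hx1; exact hxy hx1.2.symm
          · have hy1 := (Finset.mem_filter.mp hvF').2
            exact hxy (hx1.2.symm.trans hy1.2)
      calc R.card * (ξ + 1) = ∑ _i ∈ R, (ξ + 1) := by
            rw [Finset.sum_const, smul_eq_mul]
          _ ≤ ∑ i ∈ R, (insert i (F i)).card := by
            apply Finset.sum_le_sum
            intro i hi
            rw [Finset.card_insert_of_notMem (hInotF i)]
            have := (Finset.mem_filter.mp hi).2
            omega
          _ = (R.biUnion (fun i => insert i (F i))).card :=
            (Finset.card_biUnion hdisj).symm
          _ ≤ n := Finset.card_le_univ _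
    -- poor buyers are far from all other buyers
    have hfar : ∀ i ∈ P, ∀ j, s j = j → j ≠ i → (k : ℕ∞) < G.edist i j := by
      intro i hi j hsj hji
      by_contra hcon
      push_neg at hcon
      have hsi : s i = i := (Finset.mem_filter.mp (Finset.mem_filter.mp hi).1).2
      exact (Finset.mem_filter.mp hi).2 (key i hsi j hsj hji hcon)
    set cmp := G.connectedComponentMk with hcmp
    -- per-component bound on poor buyers
    have comp_claim : ∀ C : G.ConnectedComponent,
        (P.filter (fun i => cmp i = C)).card * k' ≤
          (Finset.univ.filter (fun v => cmp v = C)).card + k' := by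
      intro C
      set PC := P.filter (fun i => cmp i = C) with hPC
      by_cases hm : PC.card ≤ 1
      · calc PC.card * k' ≤ 1 * k' := Nat.mul_le_mul_right k' hm
          _ ≤ _ := by omega
      · push_neg at hm
        set ball : V → Finset V :=
          fun i => Finset.univ.filter (fun v => G.edist i v ≤ (k' : ℕ∞)) with hball
        have hPCP : ∀ i ∈ PC, i ∈ P := fun i hi => (Finset.mem_filter.mp hi).1
        have hPCbuy : ∀ i ∈ PC, s i = i := fun i hi =>
          (Finset.mem_filter.mp (Finset.mem_filter.mp (hPCP i hi)).1).2
        have hballsub : ∀ i ∈ PC, ball i ⊆ Finset.univ.filter (fun v => cmp v = C) := by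
          intro i hi v hv
          have hle := (Finset.mem_filter.mp hv).2
          have hreach : G.Reachable i v :=
            G.reachable_of_edist_ne_top (ne_top_of_le_ne_top (by simp) hle)
          simp only [Finset.mem_filter, Finset.mem_univ, true_and]
          have : cmp v = cmp i := (SimpleGraph.ConnectedComponent.sound hreach.symm)
          rw [this]
          exact (Finset.mem_filter.mp hi).2
        have hballcard : ∀ i ∈ PC, k' + 1 ≤ (ball i).card := by
          intro i hi
          obtain ⟨j, hj, hjne⟩ := Finset.exists_mem_ne hm i
          have hreach : G.Reachable i j := by
            have h1 : cmp i = C := (Finset.mem_filter.mp hi).2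
            have h2 : cmp j = C := (Finset.mem_filter.mp hj).2
            exact SimpleGraph.ConnectedComponent.exact (h1.trans h2.symm)
          have hne_top : G.edist i j ≠ ⊤ := by
            rw [SimpleGraph.edist_ne_top_iff_reachable]; exact hreach
          have hgt : (k' : ℕ∞) < G.edist i j := by
            have h1 := hfar i (hPCP i hi) j (hPCbuy j hj) hjne
            have h2 : k' ≤ k := Nat.div_le_self k 2
            exact lt_of_le_of_lt (by exact_mod_cast h2) h1
          exact sggac_ball_card G i j k' hgt hne_top
        have hballdisj : ∀ x ∈ PC, ∀ y ∈ PC, x ≠ y → Disjoint (ball x) (ball y) := by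
          intro x hx y hy hxy
          rw [Finset.disjoint_left]
          intro v hv hv'
          have h1 := (Finset.mem_filter.mp hv).2
          have h2 := (Finset.mem_filter.mp hv').2
          have htri : G.edist x y ≤ G.edist x v + G.edist v y := G.edist_triangle
          have h2' : G.edist v y ≤ (k' : ℕ∞) := by rwa [SimpleGraph.edist_comm]
          have hle : G.edist x y ≤ (k : ℕ∞) := by
            calc G.edist x y ≤ G.edist x v + G.edist v y := htri
              _ ≤ (k' : ℕ∞) + (k' : ℕ∞) := add_le_add h1 h2'
              _ ≤ (k : ℕ∞) := by exact_mod_cast Nat.cast_le.mpr hk'2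
          exact absurd hle (not_le.mpr (hfar x (hPCP x hx) y (hPCbuy y hy) hxy.symm))
        calc PC.card * k' ≤ PC.card * (k' + 1) :=
              Nat.mul_le_mul_left _ (by omega)
          _ = ∑ _i ∈ PC, (k' + 1) := by rw [Finset.sum_const, smul_eq_mul]
          _ ≤ ∑ i ∈ PC, (ball i).card := Finset.sum_le_sum hballcard
          _ = (PC.biUnion ball).card := (Finset.card_biUnion hballdisj).symm
          _ ≤ (Finset.univ.filter (fun v => cmp v = C)).card := by
              apply Finset.card_le_card
              intro v hv
              obtain ⟨i, hi, hvi⟩ := Finset.mem_biUnion.mp hv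
              exact hballsub i hi hvi
          _ ≤ _ := by omega
    -- sum over components
    have hPsum : P.card = ∑ C : G.ConnectedComponent,
        (P.filter (fun i => cmp i = C)).card :=
      Finset.card_eq_sum_card_fiberwise (fun x _ => Finset.mem_univ (cmp x))
    have hnsum : n = ∑ C : G.ConnectedComponent,
        (Finset.univ.filter (fun v => cmp v = C)).card := by
      rw [hn, ← Finset.card_univ]
      exact Finset.card_eq_sum_card_fiberwise (fun x _ => Finset.mem_univ (cmp x))
    have hk'pos : (0 : ℚ) < (k' : ℚ) := by exact_mod_cast hk'1
    have hc : (Nat.card G.ConnectedComponent : ℚ) =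
        (Fintype.card G.ConnectedComponent : ℚ) := by
      rw [Nat.card_eq_fintype_card]
    have hPQ : (P.card : ℚ) ≤ (n : ℚ) / (k' : ℚ) + (Nat.card G.ConnectedComponent : ℚ) := by
      rw [hc]
      calc (P.card : ℚ) = ∑ C : G.ConnectedComponent,
            ((P.filter (fun i => cmp i = C)).card : ℚ) := by
            rw [hPsum]; push_cast; ring
        _ ≤ ∑ C : G.ConnectedComponent,
            (((Finset.univ.filter (fun v => cmp v = C)).card : ℚ) / (k' : ℚ) + 1) := by
            apply Finset.sum_le_sum
            intro C _
            have hq : ((P.filter (fun i => cmp i = C)).card : ℚ) * (k' : ℚ) ≤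
                ((Finset.univ.filter (fun v => cmp v = C)).card : ℚ) + (k' : ℚ) := by
              exact_mod_cast comp_claim C
            have h2 : ((P.filter (fun i => cmp i = C)).card : ℚ) ≤
                (((Finset.univ.filter (fun v => cmp v = C)).card : ℚ) + (k' : ℚ)) / (k' : ℚ) :=
              (le_div_iff₀ hk'pos).mpr hq
            rwa [add_div, div_self (ne_of_gt hk'pos)] at h2
        _ = (n : ℚ) / (k' : ℚ) + (Fintype.card G.ConnectedComponent : ℚ) := by
            rw [Finset.sum_add_distrib, ← Finset.sum_div]
            congr 1
            · congr 1
              rw [hnsum]; push_cast; ring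
            · simp
      
    have hRQ : (R.card : ℚ) ≤ (n : ℚ) / ((ξ : ℚ) + 1) := by
      rw [le_div_iff₀ (by positivity)]
      exact_mod_cast hrich
    have hBQ : (B.card : ℚ) = (R.card : ℚ) + (P.card : ℚ) := by exact_mod_cast hBRP.symm
    rw [hBQ]
    linarith [hRQ, hPQ]
  · -- part 2
    intro D hD
    choose d hd1 hd2 using hD
    have hmk : ∀ C : G.ConnectedComponent,
        G.connectedComponentMk (d (Quot.out C)) = C := by
      intro C
      have hreach : G.Reachable (Quot.out C) (d (Quot.out C)) :=
        G.reachable_of_edist_ne_top (ne_top_of_le_ne_top hktop (hd2 (Quot.out C)))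
      exact (SimpleGraph.ConnectedComponent.sound hreach).symm.trans (Quot.out_eq C)
    have hinj : Function.Injective
        (fun C : G.ConnectedComponent => (⟨d (Quot.out C), hd1 (Quot.out C)⟩ : D)) := by
      intro C1 C2 hEq
      have he : d (Quot.out C1) = d (Quot.out C2) := congrArg Subtype.val hEq
      have := congrArg G.connectedComponentMk he
      rwa [hmk C1, hmk C2] at this
    have h := Nat.card_le_card_of_injective _ hinj
    rwa [show Nat.card ↥D = D.card from by
      rw [Nat.card_eq_fintype_card, Fintype.card_coe]] at h
end

section
/- For any integers k, m ≥ 1, in the 'spider' graph consisting of a center vertex attached to m arms, each a path on k vertices, there is a k-dominating set of size 1 (the center), but the set consisting of the m far endpoints of the arms is a k-independent dominating set of size m. -/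
/-- The spider graph `S_{k,m}`: a center (`Sum.inl ()`) plus `m` arms, each a
path on `k` vertices, whose `0`-th vertex is adjacent to the center. -/
def spiderGraph (k m : ℕ) : SimpleGraph (Unit ⊕ Fin m × Fin k) :=
  SimpleGraph.fromRel (fun x y =>
    (∃ j i, x = Sum.inl () ∧ y = Sum.inr (j, i) ∧ (i : ℕ) = 0) ∨
    (∃ j i i', x = Sum.inr (j, i) ∧ y = Sum.inr (j, i') ∧
      (i' : ℕ) = (i : ℕ) + 1))

namespace SpiderAux

variable {k m : ℕ}

lemma adj_center (hk : 0 < k) (j : Fin m) :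
    (spiderGraph k m).Adj (Sum.inl ()) (Sum.inr (j, ⟨0, hk⟩)) := by
  simp only [spiderGraph, SimpleGraph.fromRel_adj]
  exact ⟨by simp, Or.inl (Or.inl ⟨j, ⟨0, hk⟩, by simp⟩)⟩

lemma adj_step (j : Fin m) (i i' : Fin k) (h : (i' : ℕ) = (i : ℕ) + 1) :
    (spiderGraph k m).Adj (Sum.inr (j, i)) (Sum.inr (j, i')) := by
  simp only [spiderGraph, SimpleGraph.fromRel_adj]
  refine ⟨?_, Or.inl (Or.inr ⟨j, i, i', by simp [h]⟩)⟩
  simp only [ne_eq, Sum.inr.injEq, Prod.mk.injEq, true_and]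
  intro he; rw [he] at h; omega

lemma adj_edist_le {u v : Unit ⊕ Fin m × Fin k} (h : (spiderGraph k m).Adj u v) :
    (spiderGraph k m).edist u v ≤ 1 := by
  have := SimpleGraph.edist_le h.toWalk
  simpa using this

lemma edist_to_center (j : Fin m) :
    ∀ n : ℕ, ∀ h : n < k,
      (spiderGraph k m).edist (Sum.inr (j, ⟨n, h⟩)) (Sum.inl ()) ≤ ((n + 1 : ℕ) : ℕ∞) := by
  intro n
  induction n with
  | zero =>
    intro h
    have := adj_edist_le ((adj_center h j).symm)
    simpa using this
  | succ n ih =>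
    intro h
    have h' : n < k := by omega
    calc (spiderGraph k m).edist (Sum.inr (j, ⟨n+1, h⟩)) (Sum.inl ())
        ≤ (spiderGraph k m).edist (Sum.inr (j, ⟨n+1, h⟩)) (Sum.inr (j, ⟨n, h'⟩)) +
          (spiderGraph k m).edist (Sum.inr (j, ⟨n, h'⟩)) (Sum.inl ()) :=
          SimpleGraph.edist_triangle
      _ ≤ 1 + ((n + 1 : ℕ) : ℕ∞) := by
          refine add_le_add ?_ (ih h')
          rw [SimpleGraph.edist_comm]
          exact adj_edist_le (adj_step j _ _ rfl)
      _ = ((n + 1 + 1 : ℕ) : ℕ∞) := by push_cast; ring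

lemma edist_to_end (hk : 1 ≤ k) (j : Fin m) :
    ∀ d n : ℕ, ∀ h : n < k, n + d = k - 1 →
      (spiderGraph k m).edist (Sum.inr (j, ⟨n, h⟩)) (Sum.inr (j, ⟨k - 1, by omega⟩))
        ≤ (d : ℕ∞) := by
  intro d
  induction d with
  | zero =>
    intro n h hnd
    have hn : n = k - 1 := by omega
    subst hn
    simp [SimpleGraph.edist_self]
  | succ d ih =>
    intro n h hnd
    have h' : n + 1 < k := by omega
    calc (spiderGraph k m).edist (Sum.inr (j, ⟨n, h⟩)) (Sum.inr (j, ⟨k - 1, by omega⟩))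
        ≤ (spiderGraph k m).edist (Sum.inr (j, ⟨n, h⟩)) (Sum.inr (j, ⟨n + 1, h'⟩)) +
          (spiderGraph k m).edist (Sum.inr (j, ⟨n + 1, h'⟩)) (Sum.inr (j, ⟨k - 1, by omega⟩)) :=
          SimpleGraph.edist_triangle
      _ ≤ 1 + (d : ℕ∞) := add_le_add (adj_edist_le (adj_step j _ _ rfl)) (ih (n+1) h' (by omega))
      _ = ((d + 1 : ℕ) : ℕ∞) := by push_cast; ring

/-- Potential function for the lower bound. -/
def pot (k : ℕ) (j : Fin m) : Unit ⊕ Fin m × Fin k → ℕ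
  | Sum.inl _ => k
  | Sum.inr (j', i) => if j' = j then k - 1 - (i : ℕ) else k + 1 + (i : ℕ)

lemma pot_adj (j : Fin m) {u v : Unit ⊕ Fin m × Fin k}
    (h : (spiderGraph k m).Adj u v) : pot k j u ≤ pot k j v + 1 := by
  simp only [spiderGraph, SimpleGraph.fromRel_adj] at h
  obtain ⟨-, h | h⟩ := h <;>
  · rcases h with ⟨j', i, rfl, rfl, hi⟩ | ⟨j', i, i', rfl, rfl, hi⟩
    · have hik := i.isLt
      simp only [pot]
      split <;> omega
    · have hik := i.isLt
      have hik' := i'.isLt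
      simp only [pot]
      split <;> omega

lemma pot_walk (j : Fin m) {u v : Unit ⊕ Fin m × Fin k}
    (p : (spiderGraph k m).Walk u v) : pot k j u ≤ pot k j v + p.length := by
  induction p with
  | nil => simp
  | cons h p ih =>
    have := pot_adj j h
    simp only [SimpleGraph.Walk.length_cons]
    omega

end SpiderAux

/-- In the spider `S_{k,m}`, the center alone is a `k`-dominating set of size
`1`, while the `m` far endpoints of the arms form a `k`-independent dominating
set of size `m`. -/
theorem spider_pos_lower (k m : ℕ) (hk : 1 ≤ k) (hm : 1 ≤ m) :
    (∀ v, ∃ d ∈ ({Sum.inl ()} : Finset (Unit ⊕ Fin m × Fin k)),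
        (spiderGraph k m).edist v d ≤ (k : ℕ∞)) ∧
    ((Finset.univ.image (fun j : Fin m =>
        (Sum.inr (j, ⟨k - 1, by omega⟩) : Unit ⊕ Fin m × Fin k))).card = m ∧
      (∀ v, ∃ d ∈ Finset.univ.image (fun j : Fin m =>
          (Sum.inr (j, ⟨k - 1, by omega⟩) : Unit ⊕ Fin m × Fin k)),
        (spiderGraph k m).edist v d ≤ (k : ℕ∞)) ∧
      (∀ d ∈ Finset.univ.image (fun j : Fin m =>
            (Sum.inr (j, ⟨k - 1, by omega⟩) : Unit ⊕ Fin m × Fin k)),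
        ∀ d' ∈ Finset.univ.image (fun j : Fin m =>
            (Sum.inr (j, ⟨k - 1, by omega⟩) : Unit ⊕ Fin m × Fin k)),
          d ≠ d' → (k : ℕ∞) + 1 ≤ (spiderGraph k m).edist d d')) := by
  refine ⟨?_, ?_, ?_, ?_⟩
  · -- center dominates
    intro v
    refine ⟨Sum.inl (), Finset.mem_singleton_self _, ?_⟩
    match v with
    | Sum.inl () => simp [SimpleGraph.edist_self]
    | Sum.inr (j, ⟨n, h⟩) =>
      calc (spiderGraph k m).edist (Sum.inr (j, ⟨n, h⟩)) (Sum.inl ())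
          ≤ ((n + 1 : ℕ) : ℕ∞) := SpiderAux.edist_to_center j n h
        _ ≤ (k : ℕ∞) := Nat.cast_le.mpr (by omega)
  · -- cardinality
    rw [Finset.card_image_of_injective _ (fun a b h => by simpa using h),
      Finset.card_univ, Fintype.card_fin]
  · -- endpoints dominate
    intro v
    match v with
    | Sum.inl () =>
      refine ⟨Sum.inr (⟨0, hm⟩, ⟨k - 1, by omega⟩),
        Finset.mem_image_of_mem _ (Finset.mem_univ _), ?_⟩
      calc (spiderGraph k m).edist (Sum.inl ()) (Sum.inr (⟨0, hm⟩, ⟨k - 1, by omega⟩))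
          ≤ (spiderGraph k m).edist (Sum.inl ()) (Sum.inr (⟨0, hm⟩, ⟨0, by omega⟩)) +
            (spiderGraph k m).edist (Sum.inr (⟨0, hm⟩, ⟨0, by omega⟩))
              (Sum.inr (⟨0, hm⟩, ⟨k - 1, by omega⟩)) := SimpleGraph.edist_triangle
        _ ≤ 1 + ((k - 1 : ℕ) : ℕ∞) :=
            add_le_add (SpiderAux.adj_edist_le (SpiderAux.adj_center (by omega) _))
              (SpiderAux.edist_to_end hk _ (k - 1) 0 (by omega) (by omega))
        _ ≤ (k : ℕ∞) := by
            rw [show (1 : ℕ∞) + ((k - 1 : ℕ) : ℕ∞) = ((1 + (k - 1) : ℕ) : ℕ∞) by push_cast; ring]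
            exact Nat.cast_le.mpr (by omega)
    | Sum.inr (j, ⟨n, h⟩) =>
      refine ⟨Sum.inr (j, ⟨k - 1, by omega⟩),
        Finset.mem_image_of_mem _ (Finset.mem_univ _), ?_⟩
      calc (spiderGraph k m).edist (Sum.inr (j, ⟨n, h⟩)) (Sum.inr (j, ⟨k - 1, by omega⟩))
          ≤ ((k - 1 - n : ℕ) : ℕ∞) :=
            SpiderAux.edist_to_end hk j (k - 1 - n) n h (by omega)
        _ ≤ (k : ℕ∞) := Nat.cast_le.mpr (by omega)
  · -- independence
    intro d hd d' hd' hne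
    simp only [Finset.mem_image, Finset.mem_univ, true_and] at hd hd'
    obtain ⟨j, rfl⟩ := hd
    obtain ⟨j', rfl⟩ := hd'
    have hjj' : j' ≠ j := by rintro rfl; exact hne rfl
    rcases eq_or_ne ((spiderGraph k m).edist (Sum.inr (j, ⟨k - 1, by omega⟩))
        (Sum.inr (j', ⟨k - 1, by omega⟩))) ⊤ with htop | htop
    · rw [htop]; exact le_top
    · obtain ⟨p, hp⟩ := SimpleGraph.exists_walk_of_edist_ne_top htop
      have h1 := SpiderAux.pot_walk j' p
      have h2 : SpiderAux.pot k j' (Sum.inr (j, ⟨k - 1, by omega⟩) : Unit ⊕ Fin m × Fin k)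
          = k + 1 + (k - 1) := by simp [SpiderAux.pot, hjj'.symm]
      have h3 : SpiderAux.pot k j' (Sum.inr (j', ⟨k - 1, by omega⟩) : Unit ⊕ Fin m × Fin k)
          = 0 := by simp [SpiderAux.pot]
      have hlen : k + 1 ≤ p.length := by omega
      calc (k : ℕ∞) + 1 = ((k + 1 : ℕ) : ℕ∞) := by push_cast; ring
        _ ≤ (p.length : ℕ∞) := Nat.cast_le.mpr hlen
        _ = _ := hp
end

section
/- For every finite graph, the best-response dynamics of the SGG starting from the all-zero profile (no one buys), in which vertices in a fixed order repeatedly switch to a best response, terminates in a Nash equilibrium after at most three full passes over the vertices. -/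
open Classical in
/-- Best response of vertex `i` in the SGG: buy iff no other vertex within
distance `k` buys. -/
noncomputable def brSGG {V : Type} (G : SimpleGraph V) (k : ℕ)
    (s : V → Bool) (i : V) : Bool :=
  if ∃ j, j ≠ i ∧ s j ∧ G.edist i j ≤ (k : ℕ∞) then false else true

/-- One pass of best-response dynamics: each vertex, in the order given by the
list `l`, updates its strategy to a best response. -/
noncomputable def passSGG {V : Type} [DecidableEq V] (G : SimpleGraph V)
    (k : ℕ) (l : List V) (s : V → Bool) : V → Bool :=
  l.foldl (fun t i => Function.update t i (brSGG G k t i)) s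

lemma brSGG_true {V : Type} (G : SimpleGraph V) (k : ℕ) (t : V → Bool) (i : V) :
    brSGG G k t i = true ↔ ¬ ∃ j, j ≠ i ∧ t j ∧ G.edist i j ≤ (k : ℕ∞) := by
  unfold brSGG
  by_cases h : ∃ j, j ≠ i ∧ t j ∧ G.edist i j ≤ (k : ℕ∞) <;> simp [h]

lemma brSGG_false {V : Type} (G : SimpleGraph V) (k : ℕ) (t : V → Bool) (i : V) :
    brSGG G k t i = false ↔ ∃ j, j ≠ i ∧ t j ∧ G.edist i j ≤ (k : ℕ∞) := by
  rw [← Bool.not_eq_true, brSGG_true, not_not]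

lemma brSGG_congr {V : Type} (G : SimpleGraph V) (k : ℕ) (t t' : V → Bool) (i : V)
    (h : ∀ j, j ≠ i → t j = t' j) : brSGG G k t i = brSGG G k t' i := by
  unfold brSGG
  have key : (∃ j, j ≠ i ∧ t j ∧ G.edist i j ≤ (k : ℕ∞)) ↔
      (∃ j, j ≠ i ∧ t' j ∧ G.edist i j ≤ (k : ℕ∞)) := by
    constructor
    · rintro ⟨j, hj, hb, hd⟩; exact ⟨j, hj, (h j hj) ▸ hb, hd⟩
    · rintro ⟨j, hj, hb, hd⟩; exact ⟨j, hj, (h j hj).symm ▸ hb, hd⟩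
  classical
  exact if_congr key rfl rfl

lemma pass_inv {V : Type} [DecidableEq V] (G : SimpleGraph V) (k : ℕ) :
    ∀ (l : List V) (t : V → Bool), l.Nodup → (∀ j ∈ l, t j = false) →
      (∀ i, i ∉ l → brSGG G k t i = t i) →
      ∀ i, brSGG G k (passSGG G k l t) i = passSGG G k l t i := by
  intro l
  induction l with
  | nil => intro t _ _ h3 i; exact h3 i (List.not_mem_nil)
  | cons v rest ih =>
    intro t hnd hfalse h3 i
    have hvrest : v ∉ rest := (List.nodup_cons.mp hnd).1
    set t1 : V → Bool := Function.update t v (brSGG G k t v) with ht1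
    have hchange : passSGG G k (v :: rest) t = passSGG G k rest t1 := rfl
    rw [hchange]
    apply ih t1 (List.nodup_cons.mp hnd).2
    · intro j hj
      have hjv : j ≠ v := fun h => hvrest (h ▸ hj)
      rw [ht1, Function.update_of_ne hjv]
      exact hfalse j (List.mem_cons_of_mem v hj)
    · intro j hj
      by_cases hjv : j = v
      · subst hjv
        have : brSGG G k t1 j = brSGG G k t j := by
          apply brSGG_congr
          intro m hm
          rw [ht1, Function.update_of_ne hm]
        rw [this, ht1, Function.update_self]
      · have hjl : j ∉ v :: rest := by
          intro h
          rcases List.mem_cons.mp h with h | h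
          · exact hjv h
          · exact hj h
        have hbj := h3 j hjl
        have ht1j : t1 j = t j := Function.update_of_ne hjv _ _
        rw [ht1j]
        cases htj : t j with
        | true =>
          rw [brSGG_true]
          rintro ⟨m, hm, hbm, hdm⟩
          by_cases hmv : m = v
          · subst hmv
            have hbv : t1 m = true := hbm
            rw [ht1, Function.update_self] at hbv
            have := (brSGG_true G k t m).mp hbv
            exact this ⟨j, hjv, htj, by rwa [G.edist_comm]⟩
          · rw [ht1, Function.update_of_ne hmv] at hbm
            have : brSGG G k t j = true := by rw [hbj, htj]
            exact (brSGG_true G k t j).mp this ⟨m, hm, hbm, hdm⟩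
        | false =>
          rw [brSGG_false]
          have : brSGG G k t j = false := by rw [hbj, htj]
          obtain ⟨m, hm, hbm, hdm⟩ := (brSGG_false G k t j).mp this
          have hmv : m ≠ v := by
            intro h
            rw [h, hfalse v (List.mem_cons_self)] at hbm
            exact Bool.false_ne_true hbm
          exact ⟨m, hm, by rw [ht1, Function.update_of_ne hmv]; exact hbm, hdm⟩

lemma pass_fix {V : Type} [DecidableEq V] (G : SimpleGraph V) (k : ℕ) (l : List V)
    (t : V → Bool) (h : ∀ i, brSGG G k t i = t i) : passSGG G k l t = t := by
  induction l with
  | nil => rfl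
  | cons v rest ih =>
    have : passSGG G k (v :: rest) t
        = passSGG G k rest (Function.update t v (brSGG G k t v)) := rfl
    rw [this, h v, Function.update_eq_self]
    exact ih

/-- Best-response dynamics of the SGG, starting from the all-zero profile and
sweeping the vertices in a fixed order, reaches a Nash equilibrium after at
most three full passes. -/
theorem sgg_best_response_converges {V : Type} [Fintype V] [DecidableEq V]
    (G : SimpleGraph V) (k : ℕ) (hk : 1 ≤ k) (b p : ℚ) (hp : 0 < p) (hb : p < b)
    (l : List V) (hnd : l.Nodup) (hall : ∀ v : V, v ∈ l) :
    ∀ i : V, ∀ c : Bool,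
      utilSGG G k b p
          (Function.update (passSGG G k l (passSGG G k l (passSGG G k l (fun _ => false)))) i c) i ≤
        utilSGG G k b p (passSGG G k l (passSGG G k l (passSGG G k l (fun _ => false)))) i := by
  intro i c
  set s : V → Bool := passSGG G k l (fun _ => false) with hs
  have hfix : ∀ j, brSGG G k s j = s j := by
    apply pass_inv G k l _ hnd (fun j _ => rfl)
    intro j hj; exact absurd (hall j) hj
  have h2 : passSGG G k l s = s := pass_fix G k l s hfix
  rw [h2, h2]
  cases hsi : s i with
  | true =>
    have hno : ¬ ∃ j, j ≠ i ∧ s j ∧ G.edist i j ≤ (k : ℕ∞) := by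
      apply (brSGG_true G k s i).mp
      rw [hfix i, hsi]
    have hR : utilSGG G k b p s i = b - p := by simp [utilSGG, hsi]
    rw [hR]
    cases c with
    | true =>
      have : Function.update s i true = s := by rw [← hsi]; exact Function.update_eq_self i s
      rw [this, hR]
    | false =>
      have hLi : Function.update s i false i = false := Function.update_self i false s
      have hnoex : ¬ ∃ j, Function.update s i false j = true ∧ G.edist i j ≤ (k : ℕ∞) := by
        rintro ⟨j, hj, hd⟩
        have hji : j ≠ i := by
          intro h; rw [h, hLi] at hj; exact Bool.false_ne_true hj
        rw [Function.update_of_ne hji] at hj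
        exact hno ⟨j, hji, hj, hd⟩
      have : utilSGG G k b p (Function.update s i false) i = 0 := by
        simp [utilSGG, hLi, hnoex]
      rw [this]; linarith
  | false =>
    have hex : ∃ j, j ≠ i ∧ s j ∧ G.edist i j ≤ (k : ℕ∞) := by
      apply (brSGG_false G k s i).mp
      rw [hfix i, hsi]
    obtain ⟨j, hji, hsj, hdj⟩ := hex
    have hR : utilSGG G k b p s i = b := by
      have : ∃ m, s m = true ∧ G.edist i m ≤ (k : ℕ∞) := ⟨j, hsj, hdj⟩
      simp [utilSGG, hsi, this]
    rw [hR]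
    cases c with
    | true =>
      have : utilSGG G k b p (Function.update s i true) i = b - p := by
        simp [utilSGG, Function.update_self]
      rw [this]; linarith
    | false =>
      have : Function.update s i false = s := by rw [← hsi]; exact Function.update_eq_self i s
      rw [this, hR]
end

section
/- If ξ ≤ 2⌊k/2⌋ + 1 or ξ ≤ 2, then the SGG-AC on any finite graph admits a Nash equilibrium whose number of buyers equals the minimum size of a k-dominating set (i.e., the price of stability is 1). -/
namespace SGGACaux

open Classical Finset SimpleGraph

variable {V : Type} (G : SimpleGraph V)

lemma walk_aux : ∀ {u d : V} (p : G.Walk u d) (i : ℕ), i ≤ p.length →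
    ∃ v, G.edist u v ≤ (i : ℕ∞) ∧ G.edist v d ≤ ((p.length - i : ℕ) : ℕ∞) := by
  intro u d p
  induction p with
  | nil =>
    rename_i w
    intro i hi
    have : i = 0 := by simpa using hi
    subst this
    exact ⟨w, by simp, by simp⟩
  | @cons u x d h q ih =>
    intro i hi
    match i with
    | 0 =>
      refine ⟨u, by simp, ?_⟩
      have := G.edist_le (SimpleGraph.Walk.cons h q)
      simpa using this
    | (j+1) =>
      obtain ⟨v, h1, h2⟩ := ih j (by simpa using hi)
      refine ⟨v, ?_, by simpa using h2⟩
      have htri : G.edist u v ≤ G.edist u x + G.edist x v := SimpleGraph.edist_triangle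
      have hux : G.edist u x ≤ (1 : ℕ∞) := by
        have := G.edist_le (SimpleGraph.Walk.cons h SimpleGraph.Walk.nil)
        simpa using this
      calc G.edist u v ≤ G.edist u x + G.edist x v := htri
        _ ≤ (1 : ℕ∞) + (j : ℕ∞) := add_le_add hux h1
        _ = ((j+1 : ℕ) : ℕ∞) := by push_cast; ring

lemma exists_point {u d : V} {m : ℕ} (hm : G.edist u d = (m : ℕ∞)) {t : ℕ} (ht : t ≤ m) :
    ∃ v, G.edist u v = ((m - t : ℕ) : ℕ∞) ∧ G.edist v d = (t : ℕ∞) := by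
  obtain ⟨p, hp⟩ := SimpleGraph.exists_walk_of_edist_eq_coe hm
  obtain ⟨v, h1, h2⟩ := walk_aux G p (m - t) (by omega)
  rw [show p.length - (m - t) = t by omega] at h2
  have htri : (m : ℕ∞) ≤ G.edist u v + G.edist v d := hm ▸ SimpleGraph.edist_triangle
  have hne1 : G.edist u v ≠ ⊤ := ne_top_of_le_ne_top (ENat.coe_ne_top _) h1
  have hne2 : G.edist v d ≠ ⊤ := ne_top_of_le_ne_top (ENat.coe_ne_top _) h2
  lift G.edist u v to ℕ using hne1 with a ha
  lift G.edist v d to ℕ using hne2 with c hc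
  rw [Nat.cast_le] at h1 h2
  rw [← Nat.cast_add, Nat.cast_le] at htri
  refine ⟨v, ?_, ?_⟩
  · rw [← ha, Nat.cast_inj]; omega
  · rw [← hc, Nat.cast_inj]; omega

end SGGACaux

namespace SGGACaux

open Classical Finset SimpleGraph

variable {V : Type} [Fintype V] [DecidableEq V] (G : SimpleGraph V) (k : ℕ)

def kDom (D : Finset V) : Prop := ∀ v, ∃ d ∈ D, G.edist v d ≤ (k : ℕ∞)

noncomputable def nonIso (D : Finset V) : Finset V :=
  D.filter (fun d => ∃ e ∈ D, e ≠ d ∧ G.edist d e ≤ (k : ℕ∞))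

noncomputable def mu (D : Finset V) : ℕ :=
  (Fintype.card V + 1) * D.card + (nonIso G k D).card

lemma exists_good : ∃ D : Finset V, kDom G k D ∧ ∀ D', kDom G k D' → mu G k D ≤ mu G k D' := by
  obtain ⟨D, hD, hmin⟩ := Finset.exists_min_image
    (Finset.univ.filter (fun D : Finset V => kDom G k D)) (mu G k)
    ⟨Finset.univ, by
      simp only [Finset.mem_filter]
      exact ⟨Finset.mem_univ _, fun v => ⟨v, Finset.mem_univ v, by simp⟩⟩⟩
  rw [Finset.mem_filter] at hD
  exact ⟨D, hD.2, fun D' h' => hmin D' (Finset.mem_filter.mpr ⟨Finset.mem_univ _, h'⟩)⟩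

lemma nonIso_card_le (D : Finset V) : (nonIso G k D).card ≤ Fintype.card V :=
  le_trans (Finset.card_le_card (Finset.filter_subset _ _)) (Finset.card_le_univ D)

lemma card_min {D : Finset V} (hmin : ∀ D', kDom G k D' → mu G k D ≤ mu G k D') :
    ∀ D', kDom G k D' → D.card ≤ D'.card := by
  intro D' h'
  by_contra hlt
  push_neg at hlt
  have h1 := hmin D' h'
  have h2 := nonIso_card_le G k D'
  have h3 : (Fintype.card V + 1) * (D'.card + 1) ≤ (Fintype.card V + 1) * D.card :=
    Nat.mul_le_mul_left _ hlt
  unfold mu at h1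
  nlinarith [Nat.zero_le ((nonIso G k D).card)]

/-- `v` is a private vertex of `d` w.r.t. `D`. -/
def isPriv (D : Finset V) (d v : V) : Prop :=
  G.edist v d ≤ (k : ℕ∞) ∧ ∀ e ∈ D, e ≠ d → ¬ (G.edist v e ≤ (k : ℕ∞))

lemma priv_nonempty {D : Finset V} (hD : kDom G k D)
    (hmin : ∀ D', kDom G k D' → mu G k D ≤ mu G k D') {d : V} (hd : d ∈ D)
    (hni : d ∈ nonIso G k D) : ∃ u, isPriv G k D d u := by
  by_contra hno
  push_neg at hno
  simp only [isPriv, not_and, not_forall, not_not] at hno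
  have herase : kDom G k (D.erase d) := by
    intro v
    obtain ⟨e, he, hve⟩ := hD v
    by_cases hed : e = d
    · subst hed
      obtain ⟨e', he', hne', hve'⟩ := hno v hve
      exact ⟨e', Finset.mem_erase.mpr ⟨hne', he'⟩, hve'⟩
    · exact ⟨e, Finset.mem_erase.mpr ⟨hed, he⟩, hve⟩
  have := card_min G k hmin _ herase
  have := Finset.card_erase_lt_of_mem hd
  omega

lemma far_privs {D : Finset V} (hD : kDom G k D)
    (hmin : ∀ D', kDom G k D' → mu G k D ≤ mu G k D') {d : V} (hd : d ∈ D)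
    (hni : d ∈ nonIso G k D) :
    ∃ u u', isPriv G k D d u ∧ isPriv G k D d u' ∧ ¬ (G.edist u u' ≤ (k : ℕ∞)) := by
  obtain ⟨u₀, hu₀⟩ := priv_nonempty G k hD hmin hd hni
  by_contra hno
  push_neg at hno
  -- every two privates of d are within k of each other
  have hall : ∀ u u', isPriv G k D d u → isPriv G k D d u' → G.edist u u' ≤ (k : ℕ∞) := by
    intro u u' h h'
    exact hno u u' h h'
  -- d is non-isolated: it has a buyer within k
  obtain ⟨-, e₀, he₀D, he₀ne, he₀d⟩ := Finset.mem_filter.mp hni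
  -- u₀ ∉ D and u₀ ≠ d
  have hu₀d : u₀ ≠ d := by
    rintro rfl
    exact hu₀.2 e₀ he₀D he₀ne he₀d
  have hu₀D : u₀ ∉ D := by
    intro hmem
    exact hu₀.2 u₀ hmem hu₀d (by simp)
  set D' := insert u₀ (D.erase d) with hD'
  have hcard : D'.card = D.card := by
    rw [hD', Finset.card_insert_of_notMem (fun h => hu₀D (Finset.mem_of_mem_erase h)),
      Finset.card_erase_of_mem hd]
    have := Finset.card_pos.mpr ⟨d, hd⟩
    omega
  have hdom' : kDom G k D' := by
    intro v
    obtain ⟨e, he, hve⟩ := hD v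
    by_cases hed : e = d
    · rw [hed] at hve
      by_cases hp : isPriv G k D d v
      · exact ⟨u₀, Finset.mem_insert_self _ _, hall v u₀ hp hu₀⟩
      · simp only [isPriv, not_and, not_forall, not_not] at hp
        obtain ⟨e', he', hne', hve'⟩ := hp hve
        exact ⟨e', Finset.mem_insert.mpr (Or.inr (Finset.mem_erase.mpr ⟨hne', he'⟩)), hve'⟩
    · exact ⟨e, Finset.mem_insert.mpr (Or.inr (Finset.mem_erase.mpr ⟨hed, he⟩)), hve⟩
  have hsub : nonIso G k D' ⊆ (nonIso G k D).erase d := by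
    intro x hx
    obtain ⟨hxD', e, heD', hex, hxe⟩ := Finset.mem_filter.mp hx
    have hxu₀ : x ≠ u₀ := by
      rintro rfl
      have heD : e ∈ D.erase d := by
        rcases Finset.mem_insert.mp heD' with h | h
        · exact absurd h hex
        · exact h
      exact hu₀.2 e (Finset.mem_of_mem_erase heD) (Finset.ne_of_mem_erase heD) hxe
    have hxDe : x ∈ D.erase d := by
      rcases Finset.mem_insert.mp hxD' with h | h
      · exact absurd h hxu₀
      · exact h
    have heu₀ : e ≠ u₀ := by
      rintro rfl
      exact hu₀.2 x (Finset.mem_of_mem_erase hxDe) (Finset.ne_of_mem_erase hxDe)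
        (by rwa [SimpleGraph.edist_comm] at hxe)
    have heDe : e ∈ D.erase d := by
      rcases Finset.mem_insert.mp heD' with h | h
      · exact absurd h heu₀
      · exact h
    refine Finset.mem_erase.mpr ⟨Finset.ne_of_mem_erase hxDe, ?_⟩
    exact Finset.mem_filter.mpr ⟨Finset.mem_of_mem_erase hxDe,
      ⟨e, Finset.mem_of_mem_erase heDe, hex, hxe⟩⟩
  have hlt : (nonIso G k D').card < (nonIso G k D).card := by
    calc (nonIso G k D').card ≤ ((nonIso G k D).erase d).card := Finset.card_le_card hsub
      _ < (nonIso G k D).card := Finset.card_erase_lt_of_mem hni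
  have hmu := hmin D' hdom'
  unfold mu at hmu
  rw [hcard] at hmu
  omega

end SGGACaux

namespace SGGACaux

open Classical Finset SimpleGraph

variable {V : Type} [Fintype V] [DecidableEq V] (G : SimpleGraph V) (k : ℕ)

lemma pool {D : Finset V} (hD : kDom G k D)
    (hmin : ∀ D', kDom G k D' → mu G k D ≤ mu G k D') {d : V} (hd : d ∈ D)
    (hni : d ∈ nonIso G k D) :
    ∃ f : Fin (k+1) → V, Function.Injective f ∧ ∀ i, f i ∉ D ∧ f i ≠ d ∧
      G.edist (f i) d ≤ (k : ℕ∞) ∧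
      ∀ e ∈ D, e ≠ d → G.edist (f i) d < G.edist (f i) e := by
  obtain ⟨u, u', hu, hu', huu'⟩ := far_privs G k hD hmin hd hni
  -- extract the natural distances
  have hune : G.edist u d ≠ ⊤ := ne_top_of_le_ne_top (ENat.coe_ne_top _) hu.1
  have hune' : G.edist u' d ≠ ⊤ := ne_top_of_le_ne_top (ENat.coe_ne_top _) hu'.1
  obtain ⟨m, hm⟩ : ∃ m : ℕ, G.edist u d = (m : ℕ∞) := by
    lift G.edist u d to ℕ using hune with m hm; exact ⟨m, rfl⟩
  obtain ⟨m', hm'⟩ : ∃ m' : ℕ, G.edist u' d = (m' : ℕ∞) := by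
    lift G.edist u' d to ℕ using hune' with m' hm'; exact ⟨m', rfl⟩
  have hmk : m ≤ k := by have h := hu.1; rw [hm, Nat.cast_le] at h; exact h
  have hmk' : m' ≤ k := by have h := hu'.1; rw [hm', Nat.cast_le] at h; exact h
  have hsum : k + 1 ≤ m + m' := by
    have htri : G.edist u u' ≤ G.edist u d + G.edist d u' := SimpleGraph.edist_triangle
    rw [hm, SimpleGraph.edist_comm (u := d), hm', ← Nat.cast_add] at htri
    by_contra hcon
    push_neg at hcon
    exact huu' (htri.trans (by rw [Nat.cast_le]; omega))
  set τ : ℕ → ℕ := fun t => if t + 1 ≤ m then t + 1 else m + m' + 1 - (t + 1) with hτ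
  have hτb : ∀ i : Fin (k+1), 1 ≤ τ i.1 ∧ τ i.1 ≤ k ∧
      (i.1 + 1 ≤ m → τ i.1 ≤ m) ∧ (¬ (i.1 + 1 ≤ m) → τ i.1 ≤ m') := by
    intro i
    have hik : i.1 < k + 1 := i.2
    rw [hτ]
    dsimp only
    split <;> omega
  have key : ∀ i : Fin (k+1), ∃ v, G.edist v d = (τ i.1 : ℕ∞) ∧
      ((i.1 + 1 ≤ m ∧ G.edist u v = ((m - τ i.1 : ℕ) : ℕ∞)) ∨
       (¬ (i.1 + 1 ≤ m) ∧ G.edist u' v = ((m' - τ i.1 : ℕ) : ℕ∞))) := by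
    intro i
    by_cases h : i.1 + 1 ≤ m
    · have hτi : τ i.1 = i.1 + 1 := by rw [hτ]; simp [h]
      obtain ⟨v, hv1, hv2⟩ := exists_point G hm (t := τ i.1) (by omega)
      exact ⟨v, hv2, Or.inl ⟨h, hv1⟩⟩
    · have hτi : τ i.1 = m + m' + 1 - (i.1 + 1) := by rw [hτ]; simp [h]
      have hle : τ i.1 ≤ m' := (hτb i).2.2.2 h
      obtain ⟨v, hv1, hv2⟩ := exists_point G hm' (t := τ i.1) hle
      exact ⟨v, hv2, Or.inr ⟨h, hv1⟩⟩
  set f : Fin (k+1) → V := fun i => (key i).choose with hf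
  have hdist : ∀ i, G.edist (f i) d = (τ i.1 : ℕ∞) := fun i => (key i).choose_spec.1
  have hanchor := fun i => (key i).choose_spec.2
  -- strict closeness
  have hstrict : ∀ i, ∀ e ∈ D, e ≠ d → G.edist (f i) d < G.edist (f i) e := by
    intro i e heD hed
    rw [hdist i]
    rcases eq_or_ne (G.edist (f i) e) ⊤ with htop | htop
    · rw [htop]; exact ENat.coe_lt_top _
    lift G.edist (f i) e to ℕ using htop with c hc
    rw [Nat.cast_lt]
    rcases hanchor i with ⟨hi, hw⟩ | ⟨hi, hw⟩
    · have h1 : (k : ℕ∞) < G.edist u e := not_le.mp (hu.2 e heD hed)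
      have htri : G.edist u e ≤ G.edist u (f i) + G.edist (f i) e :=
        SimpleGraph.edist_triangle
      rw [hw, ← hc, ← Nat.cast_add] at htri
      have h2 : (k : ℕ∞) < ((m - τ i.1 + c : ℕ) : ℕ∞) := lt_of_lt_of_le h1 htri
      rw [Nat.cast_lt] at h2
      have := (hτb i).2.2.1 hi
      omega
    · have h1 : (k : ℕ∞) < G.edist u' e := not_le.mp (hu'.2 e heD hed)
      have htri : G.edist u' e ≤ G.edist u' (f i) + G.edist (f i) e :=
        SimpleGraph.edist_triangle
      rw [hw, ← hc, ← Nat.cast_add] at htri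
      have h2 : (k : ℕ∞) < ((m' - τ i.1 + c : ℕ) : ℕ∞) := lt_of_lt_of_le h1 htri
      rw [Nat.cast_lt] at h2
      have := (hτb i).2.2.2 hi
      omega
  have hned : ∀ i, f i ≠ d := by
    intro i h
    have h0 := hdist i
    rw [h, SimpleGraph.edist_self] at h0
    have := (hτb i).1
    have h1 : τ i.1 = 0 := by exact_mod_cast h0.symm
    omega
  have hnD : ∀ i, f i ∉ D := by
    intro i hmem
    have := hstrict i (f i) hmem (hned i)
    rw [SimpleGraph.edist_self] at this
    simp at this
  refine ⟨f, ?_, fun i => ⟨hnD i, hned i, by rw [hdist i, Nat.cast_le]; exact (hτb i).2.1,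
    hstrict i⟩⟩
  intro i j hij
  have hττ : τ i.1 = τ j.1 := by
    have h1 := hdist i
    rw [hij, hdist j, Nat.cast_inj] at h1
    exact h1.symm
  have hik : i.1 < k + 1 := i.2
  have hjk : j.1 < k + 1 := j.2
  -- a mixed-case contradiction, as a general claim
  have hmixed : ∀ i' j' : Fin (k+1), f i' = f j' → τ i'.1 = τ j'.1 →
      i'.1 + 1 ≤ m → ¬ (j'.1 + 1 ≤ m) → False := by
    intro i' j' hij' hττ' hi hj
    rcases hanchor i' with ⟨-, hwi⟩ | ⟨hc', -⟩
    swap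
    · exact hc' hi
    rcases hanchor j' with ⟨hc', -⟩ | ⟨-, hwj⟩
    · exact hj hc'
    have htri : G.edist u u' ≤ G.edist u (f i') + G.edist (f i') u' :=
      SimpleGraph.edist_triangle
    rw [hwi, hij', SimpleGraph.edist_comm (u := f j'), hwj, ← Nat.cast_add] at htri
    have hlt : (k : ℕ∞) < ((m - τ i'.1 + (m' - τ j'.1) : ℕ) : ℕ∞) :=
      lt_of_lt_of_le (not_le.mp huu') htri
    rw [Nat.cast_lt] at hlt
    have hτj : τ j'.1 = m + m' + 1 - (j'.1 + 1) := by rw [hτ]; simp [hj]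
    have hτi : τ i'.1 = i'.1 + 1 := by rw [hτ]; simp [hi]
    have hjk' : j'.1 < k + 1 := j'.2
    omega
  by_cases hi : i.1 + 1 ≤ m <;> by_cases hj : j.1 + 1 ≤ m
  · have hτi : τ i.1 = i.1 + 1 := by rw [hτ]; simp [hi]
    have hτj : τ j.1 = j.1 + 1 := by rw [hτ]; simp [hj]
    exact Fin.ext (by omega)
  · exact absurd (hmixed i j hij hττ hi hj) (by simp)
  · exact absurd (hmixed j i hij.symm hττ.symm hj hi) (by simp)
  · have hτi : τ i.1 = m + m' + 1 - (i.1 + 1) := by rw [hτ]; simp [hi]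
    have hτj : τ j.1 = m + m' + 1 - (j.1 + 1) := by rw [hτ]; simp [hj]
    exact Fin.ext (by omega)

end SGGACaux

namespace SGGACaux

open Classical Finset SimpleGraph

variable {V : Type} [Fintype V] [DecidableEq V] (G : SimpleGraph V) (k : ℕ) (b p a : ℚ)

lemma utilAC_buy {s : V → V} {i : V} (h : s i = i) :
    utilAC G k b p a s i
      = b - p + a * (Finset.univ.filter (fun j => j ≠ i ∧ s j = i)).card := by
  rw [utilAC, if_pos h, Finset.filter_congr_decidable]

lemma utilAC_rent {s : V → V} {i : V} (h : s i ≠ i) (h2 : s (s i) = s i) :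
    utilAC G k b p a s i = b - a := by
  rw [utilAC, if_neg h, if_pos h2]

lemma utilAC_zero {s : V → V} {i : V} (h : s i ≠ i) (h2 : s (s i) ≠ s i) :
    utilAC G k b p a s i = 0 := by
  rw [utilAC, if_neg h, if_neg h2]

end SGGACaux

/-- PoS of the SGG-AC is `1` when `ξ ≤ 2⌊k/2⌋ + 1` or `ξ ≤ 2`: there is a Nash
equilibrium whose set of buyers is a `k`-dominating set of minimum size. -/
theorem sggac_pos_one {V : Type} [Fintype V] [DecidableEq V]
    (G : SimpleGraph V) (k ξ : ℕ) (hk : 1 ≤ k) (b p a : ℚ)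
    (ha : 0 < a) (hap : a < p) (hpb : p < b)
    (hξ1 : a * ξ < p) (hξ2 : p < a * (ξ + 1))
    (hξ : ξ ≤ 2 * (k / 2) + 1 ∨ ξ ≤ 2) :
    ∃ s : V → V,
      (∀ i, G.edist i (s i) ≤ (k : ℕ∞)) ∧
      (∀ i t, G.edist i t ≤ (k : ℕ∞) →
        utilAC G k b p a (Function.update s i t) i ≤ utilAC G k b p a s i) ∧
      (∀ v : V, ∃ d, s d = d ∧ G.edist v d ≤ (k : ℕ∞)) ∧
      (∀ D : Finset V, (∀ v, ∃ d ∈ D, G.edist v d ≤ (k : ℕ∞)) →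
        (Finset.univ.filter (fun i => s i = i)).card ≤ D.card) := by
  classical
  have hξk : ξ ≤ k + 1 := by rcases hξ with h | h <;> omega
  obtain ⟨D, hdom, hmin⟩ := SGGACaux.exists_good G k
  have hcard := SGGACaux.card_min G k hmin
  set near : V → V → Prop := fun v e => e ∈ D ∧ G.edist v e ≤ (k : ℕ∞) ∧
    ∀ e' ∈ D, e' ≠ e → G.edist v e < G.edist v e' with hnear_def
  set s : V → V := fun v =>
    if v ∈ D then v else if h : ∃ e, near v e then h.choose else (hdom v).choose
    with hs_def
  have hsbuy : ∀ v, v ∈ D → s v = v := by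
    intro v hv; rw [hs_def]; simp [hv]
  have hsmemD : ∀ v, v ∉ D → s v ∈ D ∧ G.edist v (s v) ≤ (k : ℕ∞) := by
    intro v hv
    rw [hs_def]
    simp only [if_neg hv]
    split_ifs with h
    · obtain ⟨h1, h2, -⟩ := h.choose_spec
      exact ⟨h1, h2⟩
    · obtain ⟨h1, h2⟩ := (hdom v).choose_spec
      exact ⟨h1, h2⟩
  have hbuy_iff : ∀ v, s v = v ↔ v ∈ D := by
    intro v
    constructor
    · intro h
      by_contra hv
      have h2 := (hsmemD v hv).1
      rw [h] at h2
      exact hv h2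
    · exact hsbuy v
  have hnear_assign : ∀ v e, v ∉ D → near v e → s v = e := by
    intro v e hv hn
    rw [hs_def]
    simp only [if_neg hv]
    rw [dif_pos ⟨e, hn⟩]
    set c := (⟨e, hn⟩ : ∃ e', near v e').choose with hc
    have hcs : near v c := (⟨e, hn⟩ : ∃ e', near v e').choose_spec
    by_contra hne
    have h1 := hcs.2.2 e hn.1 (fun hh => hne (by rw [hh]))
    have h2 := hn.2.2 c hcs.1 (fun hh => hne (by rw [hh]))
    exact absurd h1 (not_lt.mpr h2.le)
  -- follower count for non-isolated buyers
  have hfoll : ∀ d, d ∈ D → d ∈ SGGACaux.nonIso G k D →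
      (k + 1 : ℕ) ≤ (Finset.univ.filter (fun j => j ≠ d ∧ s j = d)).card := by
    intro d hd hni
    obtain ⟨f, hinj, hprop⟩ := SGGACaux.pool G k hdom hmin hd hni
    have hmaps : ∀ i : Fin (k+1), i ∈ (Finset.univ : Finset (Fin (k+1))) →
        f i ∈ Finset.univ.filter (fun j => j ≠ d ∧ s j = d) := by
      intro i _
      obtain ⟨hnD, hne, hle, hstrict⟩ := hprop i
      exact Finset.mem_filter.mpr ⟨Finset.mem_univ _,
        hne, hnear_assign (f i) d hnD ⟨hd, hle, hstrict⟩⟩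
    calc (k + 1 : ℕ) = (Finset.univ : Finset (Fin (k+1))).card := by simp
      _ ≤ _ := Finset.card_le_card_of_injOn f hmaps hinj.injOn
  refine ⟨s, ?_, ?_, ?_, ?_⟩
  · -- feasibility
    intro i
    by_cases hi : i ∈ D
    · rw [hsbuy i hi]; simp
    · exact (hsmemD i hi).2
  · -- Nash
    intro i t ht
    by_cases hiD : i ∈ D
    · have hsi : s i = i := hsbuy i hiD
      by_cases hti : t = i
      · subst hti
        rw [show Function.update s t t = s by
          nth_rewrite 2 [← hsi]; exact Function.update_eq_self t s]
      · have hui : Function.update s i t i = t := Function.update_self i t s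
        have hcur := SGGACaux.utilAC_buy G k b p a hsi
        have hune : Function.update s i t i ≠ i := by rw [hui]; exact hti
        by_cases hst : s t = t
        · have h2 : Function.update s i t (Function.update s i t i)
              = Function.update s i t i := by
            rw [hui, Function.update_of_ne hti]
            exact hst
          have hdev := SGGACaux.utilAC_rent G k b p a hune h2
          rw [hdev, hcur]
          have htD : t ∈ D := (hbuy_iff t).mp hst
          have hni : i ∈ SGGACaux.nonIso G k D :=
            Finset.mem_filter.mpr ⟨hiD, t, htD, hti, ht⟩
          have hF := le_trans hξk (hfoll i hiD hni)
          set F := (Finset.univ.filter (fun j => j ≠ i ∧ s j = i)).card with hFd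
          have h1 : (ξ : ℚ) + 1 ≤ (F : ℚ) + 1 := by
            have : (ξ : ℚ) ≤ (F : ℚ) := by exact_mod_cast hF
            linarith
          have h2 : a * ((ξ : ℚ) + 1) ≤ a * ((F : ℚ) + 1) :=
            mul_le_mul_of_nonneg_left h1 ha.le
          push_cast at hξ2 ⊢
          nlinarith
        · have h2 : Function.update s i t (Function.update s i t i)
              ≠ Function.update s i t i := by
            rw [hui, Function.update_of_ne hti]
            exact hst
          have hdev := SGGACaux.utilAC_zero G k b p a hune h2
          rw [hdev, hcur]
          have : (0:ℚ) ≤ a * ((Finset.univ.filter (fun j => j ≠ i ∧ s j = i)).card : ℚ) :=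
            mul_nonneg ha.le (Nat.cast_nonneg _)
          linarith
    · have hsi : s i ≠ i := fun h => hiD ((hbuy_iff i).mp h)
      have hsiD : s i ∈ D := (hsmemD i hiD).1
      have hcur := SGGACaux.utilAC_rent G k b p a hsi (hsbuy (s i) hsiD)
      by_cases hti : t = i
      · subst hti
        have hui : Function.update s t t t = t := Function.update_self t t s
        have hdev := SGGACaux.utilAC_buy G k b p a hui
        rw [hdev, hcur]
        have hempty : (Finset.univ.filter
            (fun j => j ≠ t ∧ Function.update s t t j = t)) = ∅ := by
          ext j
          simp only [Finset.mem_filter, Finset.mem_univ, true_and, Finset.notMem_empty,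
            iff_false, not_and]
          intro hjt hj
          rw [Function.update_of_ne hjt] at hj
          by_cases hjD : j ∈ D
          · exact hjt (by rw [← hj, hsbuy j hjD])
          · exact hiD (hj ▸ (hsmemD j hjD).1)
        rw [hempty]
        simp only [Finset.card_empty, Nat.cast_zero, mul_zero, add_zero]
        linarith
      · have hui : Function.update s i t i = t := Function.update_self i t s
        have hune : Function.update s i t i ≠ i := by rw [hui]; exact hti
        by_cases hst : s t = t
        · have h2 : Function.update s i t (Function.update s i t i)
              = Function.update s i t i := by
            rw [hui, Function.update_of_ne hti]
            exact hst
          rw [SGGACaux.utilAC_rent G k b p a hune h2, hcur]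
        · have h2 : Function.update s i t (Function.update s i t i)
              ≠ Function.update s i t i := by
            rw [hui, Function.update_of_ne hti]
            exact hst
          rw [SGGACaux.utilAC_zero G k b p a hune h2, hcur]
          linarith
  · -- domination
    intro v
    obtain ⟨d, hd, hvd⟩ := hdom v
    exact ⟨d, hsbuy d hd, hvd⟩
  · -- minimality
    intro D' hD'
    have heq : Finset.univ.filter (fun i => s i = i) = D := by
      ext x
      simp only [Finset.mem_filter, Finset.mem_univ, true_and]
      exact hbuy_iff x
    rw [heq]
    exact hcard D' hD'
end
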